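/- arXiv:1210.1972 — 3 statements merged into one kernel-verified Lean document; each statement's English description precedes it below -/
import Mathlib

section
/- Fix ε ∈ (0,1), δ > 0 with 2δ < 1 − (1−ε)^α, and μ > 0, and set t_n := exp((1+μ)ⁿ) for n ≥ 0. Then Σ_{n≥0} P[ D⁺_{[0,(1−ε)s(t_n)]}(V) > (1−2δ) ln t_n ] < ∞. -/
open MeasureTheory ProbabilityTheory Filter Set
open scoped NNReal ENNReal

noncomputable def drawUp (f : ℝ → ℝ) (a b : ℝ) : ℝ :=
  ⨆ u : Set.Icc a b, (f u.1 - ⨅ v : Set.Icc a u.1, f v.1)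

noncomputable def drawDown (f : ℝ → ℝ) (a b : ℝ) : ℝ :=
  ⨆ u : Set.Icc a b, (f u.1 - ⨅ v : Set.Icc u.1 b, f v.1)

structure IsStandardBrownianMotion {Ω : Type*} [MeasurableSpace Ω]
    (P : Measure Ω) (W : ℝ → Ω → ℝ) : Prop where
  measurable : ∀ t : ℝ, Measurable (W t)
  init : ∀ ω, W 0 ω = 0
  cont : ∀ ω, Continuous fun t => W t ω
  gauss_incr : ∀ s t : ℝ, 0 ≤ s → s ≤ t →
    Measure.map (fun ω => W t ω - W s ω) P = gaussianReal 0 (Real.toNNReal (t - s))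
  indep_incr : ∀ (n : ℕ) (t : Fin (n + 1) → ℝ), (∀ i, 0 ≤ t i) → Monotone t →
    iIndepFun
      (fun i : Fin n => fun ω => W (t i.succ) ω - W (t i.castSucc) ω) P

/-- `T` is exponentially distributed with mean `μ`. -/
def IsExponentialWithMean {Ω : Type*} [MeasurableSpace Ω]
    (P : Measure Ω) (T : Ω → ℝ) (μ : ℝ) : Prop :=
  ∀ x : ℝ, 0 ≤ x → P {ω | x < T ω} = ENNReal.ofReal (Real.exp (-(x / μ)))

noncomputable def sFun (σ b α t : ℝ) : ℝ :=
  ((2 * α * b / (σ ^ 2 * (1 - 2 * α))) * (Real.log (Real.log t))⁻¹ * Real.log t) ^ (1 / α)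

noncomputable def Vfun (σ b α : ℝ) (w : ℝ → ℝ) (x : ℝ) : ℝ :=
  σ * w x - b / (1 - α) * x ^ (1 - α)

section Discrete
variable {Ω : Type*} [MeasurableSpace Ω] {P : Measure Ω} [IsProbabilityMeasure P]
variable {ξ : ℕ → Ω → ℝ} {l : ℝ}


lemma sum_attach_filter (s t : Finset ℕ) (hts : t ⊆ s) (f : ℕ → ℝ) :
    ∑ j ∈ s.attach.filter (fun j : {x // x ∈ s} => (j:ℕ) ∈ t), f (j:ℕ) = ∑ i ∈ t, f i := by
  rw [Finset.sum_filter, Finset.sum_attach s (fun i => if i ∈ t then f i else 0),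
    Finset.sum_ite_mem, Finset.inter_eq_right.mpr hts]


/-- integrability and unit mean of the exponential of partial sums. -/
lemma prod_exp_aux (hmeas : ∀ i, Measurable (ξ i))
    (hindep : iIndepFun ξ P)
    (hint : ∀ i, Integrable (fun ω => Real.exp (l * ξ i ω)) P)
    (hmean : ∀ i, ∫ ω, Real.exp (l * ξ i ω) ∂P = 1)
    (k : ℕ) : ∀ u : ℕ, k ≤ u →
    Integrable (fun ω => Real.exp (l * ∑ i ∈ Finset.Ico k u, ξ i ω)) P ∧
      ∫ ω, Real.exp (l * ∑ i ∈ Finset.Ico k u, ξ i ω) ∂P = 1 := by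
  intro u hu
  induction u, hu using Nat.le_induction with
  | base =>
    simp only [Finset.Ico_self, Finset.sum_empty, mul_zero, Real.exp_zero]
    exact ⟨integrable_const 1, by simp⟩
  | succ u hku ih =>
    have hsplit : ∀ ω, Real.exp (l * ∑ i ∈ Finset.Ico k (u+1), ξ i ω)
        = Real.exp (l * ∑ i ∈ Finset.Ico k u, ξ i ω) * Real.exp (l * ξ u ω) := by
      intro ω
      rw [Finset.sum_Ico_succ_top hku, mul_add, Real.exp_add]
    have hdisj : Disjoint (Finset.Ico k u) ({u} : Finset ℕ) := by
      simp [Finset.disjoint_singleton_right]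
    have hIF : IndepFun (fun ω => Real.exp (l * ∑ i ∈ Finset.Ico k u, ξ i ω))
        (fun ω => Real.exp (l * ξ u ω)) P := by
      have h0 := hindep.indepFun_finset (Finset.Ico k u) {u} hdisj hmeas
      have hφ : Measurable fun y : ({x // x ∈ Finset.Ico k u} → ℝ) =>
          Real.exp (l * ∑ j ∈ (Finset.Ico k u).attach, y j) :=
        (Real.measurable_exp.comp ((Finset.measurable_sum _
          (fun j _ => measurable_pi_apply j)).const_mul l))
      have hψ : Measurable fun y : ({x // x ∈ ({u} : Finset ℕ)} → ℝ) =>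
          Real.exp (l * y ⟨u, Finset.mem_singleton_self u⟩) :=
        by fun_prop
      have h1 := h0.comp hφ hψ
      have e1 : (fun y : ({x // x ∈ Finset.Ico k u} → ℝ) =>
          Real.exp (l * ∑ j ∈ (Finset.Ico k u).attach, y j))
          ∘ (fun ω (i : {x // x ∈ Finset.Ico k u}) => ξ (i:ℕ) ω)
          = fun ω => Real.exp (l * ∑ i ∈ Finset.Ico k u, ξ i ω) := by
        funext ω
        simp only [Function.comp_apply]
        rw [Finset.sum_attach (Finset.Ico k u) (fun i => ξ i ω)]
      have e2 : (fun y : ({x // x ∈ ({u} : Finset ℕ)} → ℝ) =>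
          Real.exp (l * y ⟨u, Finset.mem_singleton_self u⟩))
          ∘ (fun ω (i : {x // x ∈ ({u} : Finset ℕ)}) => ξ (i:ℕ) ω)
          = fun ω => Real.exp (l * ξ u ω) := rfl
      rwa [e1, e2] at h1
    constructor
    · simp only [hsplit]
      exact hIF.integrable_mul ih.1 (hint u)
    · simp only [hsplit]
      have h2 := hIF.integral_mul_eq_mul_integral ih.1.aestronglyMeasurable (hint u).aestronglyMeasurable
      rw [show (∫ (ω : Ω), Real.exp (l * ∑ i ∈ Finset.Ico k u, ξ i ω) * Real.exp (l * ξ u ω) ∂P)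
        = integral P ((fun ω => Real.exp (l * ∑ i ∈ Finset.Ico k u, ξ i ω))
          * fun ω => Real.exp (l * ξ u ω)) from rfl, h2, ih.2, hmean u, one_mul]




lemma ville (hmeas : ∀ i, Measurable (ξ i))
    (hindep : iIndepFun ξ P)
    (hint : ∀ i, Integrable (fun ω => Real.exp (l * ξ i ω)) P)
    (hmean : ∀ i, ∫ ω, Real.exp (l * ξ i ω) ∂P = 1)
    (hl : 0 ≤ l)
    (hpe : ∀ k u : ℕ, k ≤ u →
      Integrable (fun ω => Real.exp (l * ∑ i ∈ Finset.Ico k u, ξ i ω)) P ∧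
      ∫ ω, Real.exp (l * ∑ i ∈ Finset.Ico k u, ξ i ω) ∂P = 1)
    (k N : ℕ) (hkN : k ≤ N) (a : ℝ) :
    P {ω | ∃ u, k ≤ u ∧ u ≤ N ∧ a ≤ ∑ i ∈ Finset.Ico k u, ξ i ω}
      ≤ ENNReal.ofReal (Real.exp (-(l * a))) := by
  classical
  set T : ℕ → Ω → ℝ := fun u ω => ∑ i ∈ Finset.Ico k u, ξ i ω with hT
  have hTmeas : ∀ u, Measurable (T u) :=
    fun u => Finset.measurable_sum _ (fun i _ => hmeas i)
  set A : ℕ → Set Ω := fun u =>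
    {ω | a ≤ T u ω} ∩ ⋂ u' ∈ Finset.Ico k u, {ω | T u' ω < a} with hAdef
  have hA : ∀ u, MeasurableSet (A u) := by
    intro u
    exact (measurableSet_le measurable_const (hTmeas u)).inter
      (MeasurableSet.biInter (Finset.Ico k u).countable_toSet
        (fun u' _ => measurableSet_lt (hTmeas u') measurable_const))
  -- inclusion into first-passage decomposition
  have hsub : {ω | ∃ u, k ≤ u ∧ u ≤ N ∧ a ≤ T u ω} ⊆ ⋃ u ∈ Finset.Icc k N, A u := by
    intro ω hω
    have hex : ∃ u, k ≤ u ∧ u ≤ N ∧ a ≤ T u ω := hω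
    set u := Nat.find hex with hu
    obtain ⟨h1, h2, h3⟩ := Nat.find_spec hex
    refine Set.mem_biUnion (Finset.mem_Icc.mpr ⟨h1, h2⟩) ?_
    refine ⟨h3, ?_⟩
    simp only [Set.mem_iInter]
    intro u' hu'
    rcases Finset.mem_Ico.mp hu' with ⟨hku', hu'u⟩
    by_contra hcon
    simp only [Set.mem_setOf_eq, not_lt] at hcon
    exact Nat.find_min hex hu'u ⟨hku', le_trans (le_of_lt hu'u) h2, hcon⟩
  -- pairwise disjointness
  have hdisj2 : ∀ u v : ℕ, k ≤ u → u < v → Disjoint (A u) (A v) := by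
    intro u v hku huv
    rw [Set.disjoint_left]
    intro ω hωu hωv
    have h2 := hωv.2
    simp only [Set.mem_iInter] at h2
    have hlt : T u ω < a := h2 u (Finset.mem_Ico.mpr ⟨hku, huv⟩)
    have hge : a ≤ T u ω := hωu.1
    exact absurd hge (not_le.mpr hlt)
  have hdisj : (↑(Finset.Icc k N) : Set ℕ).PairwiseDisjoint A := by
    intro u hu v hv huv
    rcases lt_or_gt_of_ne huv with h | h
    · exact hdisj2 u v (Finset.mem_Icc.mp (by exact_mod_cast hu)).1 h
    · exact (hdisj2 v u (Finset.mem_Icc.mp (by exact_mod_cast hv)).1 h).symm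
  -- the key per-piece estimate
  have main : ∀ u ∈ Finset.Icc k N,
      Real.exp (l * a) * (P (A u)).toReal ≤ ∫ ω in A u, Real.exp (l * T N ω) ∂P := by
    intro u hu
    rcases Finset.mem_Icc.mp hu with ⟨hku, huN⟩
    set X : Ω → ℝ := (A u).indicator (fun ω => Real.exp (l * T u ω)) with hX
    set Y : Ω → ℝ := fun ω => Real.exp (l * ∑ i ∈ Finset.Ico u N, ξ i ω) with hY
    have hXint : Integrable X P := ((hpe k u hku).1).indicator (hA u)
    have hYint : Integrable Y P := (hpe u N huN).1
    have step1 : ∀ ω, (A u).indicator (fun ω' => Real.exp (l * T N ω')) ω = X ω * Y ω := by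
      intro ω
      by_cases hω : ω ∈ A u
      · rw [Set.indicator_of_mem hω, hX, Set.indicator_of_mem hω, ← Real.exp_add, ← mul_add,
          Finset.sum_Ico_consecutive _ hku huN]
      · simp [hX, Set.indicator_of_notMem hω]
    -- independence of X and Y
    have step2 : IndepFun X Y P := by
      set s1 := Finset.Ico k u with hs1
      set s2 := Finset.Ico u N with hs2
      set U : ℕ → ({x // x ∈ s1} → ℝ) → ℝ := fun w y =>
        ∑ j ∈ s1.attach.filter (fun j : {x // x ∈ s1} => (j:ℕ) ∈ Finset.Ico k w), y j with hU
      have hUmeas : ∀ w, Measurable (U w) :=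
        fun w => Finset.measurable_sum _ (fun j _ => measurable_pi_apply j)
      set B : Set ({x // x ∈ s1} → ℝ) :=
        {y | a ≤ U u y} ∩ ⋂ u' ∈ Finset.Ico k u, {y | U u' y < a} with hB
      have hBmeas : MeasurableSet B :=
        (measurableSet_le measurable_const (hUmeas u)).inter
          (MeasurableSet.biInter (Finset.Ico k u).countable_toSet
            (fun u' _ => measurableSet_lt (hUmeas u') measurable_const))
      set φ : ({x // x ∈ s1} → ℝ) → ℝ := B.indicator (fun y => Real.exp (l * U u y)) with hφdef
      have hφ : Measurable φ :=
        Measurable.indicator (Real.measurable_exp.comp ((hUmeas u).const_mul l)) hBmeas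
      set ψ : ({x // x ∈ s2} → ℝ) → ℝ :=
        fun y => Real.exp (l * ∑ j ∈ s2.attach, y j) with hψdef
      have hψ : Measurable ψ :=
        Real.measurable_exp.comp ((Finset.measurable_sum _
          (fun j _ => measurable_pi_apply j)).const_mul l)
      have h0 := (hindep.indepFun_finset s1 s2
        (Finset.Ico_disjoint_Ico_consecutive k u N) hmeas).comp hφ hψ
      have hUT : ∀ w, w ≤ u → ∀ ω, U w (fun i : {x // x ∈ s1} => ξ (i:ℕ) ω) = T w ω := by
        intro w hwu ω
        exact sum_attach_filter s1 (Finset.Ico k w)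
          (Finset.Ico_subset_Ico le_rfl hwu) (fun i => ξ i ω)
      have hmem : ∀ ω, ((fun i : {x // x ∈ s1} => ξ (i:ℕ) ω) ∈ B) ↔ ω ∈ A u := by
        intro ω
        simp only [hB, hAdef, Set.mem_inter_iff, Set.mem_setOf_eq, Set.mem_iInter]
        constructor
        · rintro ⟨hy1, hy2⟩
          rw [hUT u le_rfl ω] at hy1
          refine ⟨hy1, fun u' hu' => ?_⟩
          have h3 := hy2 u' hu'
          rwa [hUT u' (le_of_lt (Finset.mem_Ico.mp hu').2) ω] at h3
        · rintro ⟨hy1, hy2⟩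
          rw [← hUT u le_rfl ω] at hy1
          refine ⟨hy1, fun u' hu' => ?_⟩
          have h3 := hy2 u' hu'
          rwa [← hUT u' (le_of_lt (Finset.mem_Ico.mp hu').2) ω] at h3
      have e1 : (φ ∘ fun ω (i : {x // x ∈ s1}) => ξ (i:ℕ) ω) = X := by
        funext ω
        simp only [Function.comp_apply, hφdef]
        by_cases hω : ω ∈ A u
        · rw [Set.indicator_of_mem ((hmem ω).mpr hω), hX, Set.indicator_of_mem hω,
            hUT u le_rfl ω]
        · rw [Set.indicator_of_notMem (fun hc => hω ((hmem ω).mp hc)), hX,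
            Set.indicator_of_notMem hω]
      have e2 : (ψ ∘ fun ω (i : {x // x ∈ s2}) => ξ (i:ℕ) ω) = Y := by
        funext ω
        simp only [Function.comp_apply, hψdef, hY]
        rw [Finset.sum_attach s2 (fun i => ξ i ω)]
      rwa [e1, e2] at h0
    -- put it together
    have hprod := step2.integral_mul_eq_mul_integral hXint.aestronglyMeasurable hYint.aestronglyMeasurable
    have hprod2 : ∫ ω, X ω * Y ω ∂P = (∫ ω, X ω ∂P) * ∫ ω, Y ω ∂P := hprod
    calc Real.exp (l * a) * (P (A u)).toReal
        ≤ ∫ ω in A u, Real.exp (l * T u ω) ∂P := by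
          have hc : ∀ ω ∈ A u, Real.exp (l * a) ≤ Real.exp (l * T u ω) := by
            intro ω hω
            exact Real.exp_le_exp.mpr (mul_le_mul_of_nonneg_left hω.1 hl)
          have := setIntegral_ge_of_const_le (hA u) (measure_ne_top P _) hc
            ((hpe k u hku).1).integrableOn
          rw [smul_eq_mul, mul_comm] at this
          exact this
      _ = ∫ ω, X ω ∂P := (integral_indicator (hA u)).symm
      _ = (∫ ω, X ω ∂P) * ∫ ω, Y ω ∂P := by rw [(hpe u N huN).2, mul_one]
      _ = ∫ ω, X ω * Y ω ∂P := hprod2.symm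
      _ = ∫ ω, (A u).indicator (fun ω' => Real.exp (l * T N ω')) ω ∂P := by
          congr 1; funext ω; rw [step1 ω]
      _ = ∫ ω in A u, Real.exp (l * T N ω) ∂P := integral_indicator (hA u)
  -- sum up
  have keyreal : ∑ u ∈ Finset.Icc k N, (P (A u)).toReal ≤ Real.exp (-(l * a)) := by
    have hsum : Real.exp (l * a) * ∑ u ∈ Finset.Icc k N, (P (A u)).toReal ≤ 1 := by
      rw [Finset.mul_sum]
      calc ∑ u ∈ Finset.Icc k N, Real.exp (l * a) * (P (A u)).toReal
          ≤ ∑ u ∈ Finset.Icc k N, ∫ ω in A u, Real.exp (l * T N ω) ∂P :=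
            Finset.sum_le_sum main
        _ = ∫ ω in ⋃ u ∈ Finset.Icc k N, A u, Real.exp (l * T N ω) ∂P :=
            (integral_biUnion_finset _ (fun u _ => hA u) hdisj
              (fun u _ => ((hpe k N hkN).1).integrableOn)).symm
        _ ≤ ∫ ω, Real.exp (l * T N ω) ∂P :=
            setIntegral_le_integral ((hpe k N hkN).1)
              (ae_of_all _ (fun ω => le_of_lt (Real.exp_pos _)))
        _ = 1 := (hpe k N hkN).2
    have hpos := Real.exp_pos (l * a)
    rw [Real.exp_neg]
    calc ∑ u ∈ Finset.Icc k N, (P (A u)).toReal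
        = (Real.exp (l * a))⁻¹ * (Real.exp (l * a) *
            ∑ u ∈ Finset.Icc k N, (P (A u)).toReal) := by
          field_simp
      _ ≤ (Real.exp (l * a))⁻¹ * 1 := by
          exact mul_le_mul_of_nonneg_left hsum (le_of_lt (inv_pos.mpr hpos))
      _ = (Real.exp (l * a))⁻¹ := mul_one _
  show P {ω | ∃ u, k ≤ u ∧ u ≤ N ∧ a ≤ T u ω} ≤ ENNReal.ofReal (Real.exp (-(l * a)))
  calc P {ω | ∃ u, k ≤ u ∧ u ≤ N ∧ a ≤ T u ω}
      ≤ P (⋃ u ∈ Finset.Icc k N, A u) := measure_mono hsub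
    _ = ∑ u ∈ Finset.Icc k N, P (A u) := measure_biUnion_finset hdisj (fun u _ => hA u)
    _ = ∑ u ∈ Finset.Icc k N, ENNReal.ofReal ((P (A u)).toReal) := by
        refine Finset.sum_congr rfl (fun u _ => ?_)
        rw [ENNReal.ofReal_toReal (measure_ne_top P _)]
    _ = ENNReal.ofReal (∑ u ∈ Finset.Icc k N, (P (A u)).toReal) :=
        (ENNReal.ofReal_sum_of_nonneg (fun _ _ => ENNReal.toReal_nonneg)).symm
    _ ≤ ENNReal.ofReal (Real.exp (-(l * a))) := ENNReal.ofReal_le_ofReal keyreal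


lemma sum_attach_filter' (s t : Finset ℕ) (hts : t ⊆ s) (f : ℕ → ℝ) :
    ∑ j ∈ s.attach.filter (fun j : {x // x ∈ s} => (j:ℕ) ∈ t), f (j:ℕ) = ∑ i ∈ t, f i := by
  rw [Finset.sum_filter, Finset.sum_attach s (fun i => if i ∈ t then f i else 0),
    Finset.sum_ite_mem, Finset.inter_eq_right.mpr hts]


lemma level (hmeas : ∀ i, Measurable (ξ i))
    (hindep : iIndepFun ξ P)
    (hl : 0 ≤ l)
    (hville : ∀ (k N : ℕ), k ≤ N → ∀ a : ℝ,
      P {ω | ∃ u, k ≤ u ∧ u ≤ N ∧ a ≤ ∑ i ∈ Finset.Ico k u, ξ i ω}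
        ≤ ENNReal.ofReal (Real.exp (-(l * a))))
    (N K : ℕ) (h' D : ℝ) (hh' : 0 < h') (hD : 0 < D) :
    P {ω | ∃ i j, i ≤ j ∧ j ≤ N ∧
        h' ≤ (∑ t ∈ Finset.range j, ξ t ω) - ∑ t ∈ Finset.range i, ξ t ω}
      ≤ (K+1) * ENNReal.ofReal (Real.exp (-(l * (h' - D))))
        + P {ω | ∃ i, i ≤ N ∧ (∑ t ∈ Finset.range i, ξ t ω) ≤ -(K * D)} := by
  classical
  set S : ℕ → Ω → ℝ := fun i ω => ∑ t ∈ Finset.range i, ξ t ω with hS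
  have hSmeas : ∀ i, Measurable (S i) := fun i => Finset.measurable_sum _ (fun t _ => hmeas t)
  set G : Set Ω := {ω | ∃ i, i ≤ N ∧ S i ω ≤ -(K * D)} with hG
  set C : ℕ → ℕ → Set Ω := fun j k =>
    {ω | S k ω ≤ -(j * D)} ∩ ⋂ k' ∈ Finset.range k, {ω | -(j * D) < S k' ω} with hC
  set Bev : ℕ → Set Ω := fun k =>
    {ω | ∃ u, k ≤ u ∧ u ≤ N ∧ (h' - D) ≤ ∑ t ∈ Finset.Ico k u, ξ t ω} with hBev
  have hCmeas : ∀ j k, MeasurableSet (C j k) := by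
    intro j k
    exact (measurableSet_le (hSmeas k) measurable_const).inter
      (MeasurableSet.biInter (Finset.range k).countable_toSet
        (fun k' _ => measurableSet_lt measurable_const (hSmeas k')))
  have hBmeas : ∀ k, MeasurableSet (Bev k) := by
    intro k
    have : Bev k = ⋃ u ∈ Finset.Icc k N,
        {ω | (h' - D) ≤ ∑ t ∈ Finset.Ico k u, ξ t ω} := by
      ext ω
      simp only [hBev, Set.mem_setOf_eq, Set.mem_iUnion, Finset.mem_Icc, exists_prop]
      constructor
      · rintro ⟨u, h1, h2, h3⟩; exact ⟨u, ⟨h1, h2⟩, h3⟩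
      · rintro ⟨u, ⟨h1, h2⟩, h3⟩; exact ⟨u, h1, h2, h3⟩
    rw [this]
    exact MeasurableSet.biUnion (Finset.Icc k N).countable_toSet
      (fun u _ => measurableSet_le measurable_const
        (Finset.measurable_sum _ (fun t _ => hmeas t)))
  set F : ℕ → Set Ω := fun j => ⋃ k ∈ Finset.range (N+1), (C j k ∩ Bev k) with hF
  -- inclusion
  have hsub : {ω | ∃ i j, i ≤ j ∧ j ≤ N ∧ h' ≤ S j ω - S i ω}
      ⊆ (⋃ j ∈ Finset.range (K+1), F j) ∪ G := by
    intro ω hω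
    obtain ⟨i, j0, hij, hjN, hval⟩ := hω
    by_cases hGmem : ω ∈ G
    · exact Or.inr hGmem
    refine Or.inl ?_
    set r : ℝ := -(S i ω) with hr
    set jl : ℕ := ⌊r / D⌋₊ with hjl
    have hiN : i ≤ N := le_trans hij hjN
    have hrK : r < K * D := by
      have : ¬ (S i ω ≤ -(K * D)) := fun hc => hGmem ⟨i, hiN, hc⟩
      push_neg at this
      linarith
    have hjlK : jl ≤ K := by
      rcases le_or_gt r 0 with h0 | h0
      · have : r / D < 1 := (div_lt_one hD).mpr (by linarith)
        simp [hjl, Nat.floor_eq_zero.mpr this]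
      · have h1 : r / D < K := (div_lt_iff₀ hD).mpr hrK
        exact le_of_lt (Nat.floor_lt (le_of_lt (div_pos h0 hD))|>.mpr h1)
    have hup : r < (jl + 1) * D := by
      have := Nat.lt_floor_add_one (r / D)
      calc r = (r / D) * D := by field_simp
        _ < ((jl : ℝ) + 1) * D := by
            apply mul_lt_mul_of_pos_right _ hD
            exact_mod_cast this
    have hex : ∃ k, S k ω ≤ -(jl * D) := by
      rcases Nat.eq_zero_or_pos jl with h0 | h0
      · exact ⟨0, by simp [hS, h0]⟩
      · refine ⟨i, ?_⟩
        have h1 : (1:ℝ) ≤ (jl:ℝ) := by exact_mod_cast h0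
        have h2 : (jl:ℝ) ≤ r / D := Nat.floor_le (by
          rcases le_or_gt 0 (r/D) with h | h
          · exact h
          · exfalso
            have : jl = 0 := Nat.floor_eq_zero.mpr (by linarith)
            omega)
        have h3 : (jl:ℝ) * D ≤ r := (le_div_iff₀ hD).mp h2
        linarith [hr]
    set κ := Nat.find hex with hκ
    have hκspec : S κ ω ≤ -(jl * D) := Nat.find_spec hex
    have hκi : κ ≤ i := by
      rcases Nat.eq_zero_or_pos jl with h0 | h0
      · have h00 : S 0 ω ≤ -(jl * D) := by simp [hS, h0]
        have h01 : Nat.find hex ≤ 0 := Nat.find_le h00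
        rw [← hκ] at h01
        omega
      · have h1 : (jl:ℝ) ≤ r / D := Nat.floor_le (by
          rcases le_or_gt 0 (r/D) with h | h
          · exact h
          · exfalso
            have : jl = 0 := Nat.floor_eq_zero.mpr (by linarith)
            omega)
        have h3 : (jl:ℝ) * D ≤ r := (le_div_iff₀ hD).mp h1
        exact Nat.find_le (by linarith)
    refine Set.mem_biUnion (Finset.mem_range.mpr (Nat.lt_succ_of_le hjlK)) ?_
    refine Set.mem_biUnion (Finset.mem_range.mpr (Nat.lt_succ_of_le (le_trans hκi hiN))) ?_
    constructor
    · refine ⟨hκspec, ?_⟩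
      simp only [Set.mem_iInter]
      intro k' hk'
      have := Nat.find_min hex (Finset.mem_range.mp hk')
      push_neg at this
      exact this
    · refine ⟨j0, le_trans hκi hij, hjN, ?_⟩
      have hsum : ∑ t ∈ Finset.Ico κ j0, ξ t ω = S j0 ω - S κ ω :=
        Finset.sum_Ico_eq_sub _ (le_trans hκi hij)
      have hSκ : S κ ω ≤ S i ω + D := by
        have : -((jl:ℝ) * D) ≤ -r + D := by nlinarith
        rw [hr] at this
        linarith [hκspec]
      rw [hsum]
      linarith [hval]
  -- per-level bound
  have hlevel : ∀ j, P (F j) ≤ ENNReal.ofReal (Real.exp (-(l * (h' - D)))) := by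
    intro j
    have hCdisj : (↑(Finset.range (N+1)) : Set ℕ).PairwiseDisjoint (C j) := by
      have key : ∀ u v : ℕ, u < v → Disjoint (C j u) (C j v) := by
        intro u v huv
        rw [Set.disjoint_left]
        intro ω hωu hωv
        have h2 := hωv.2
        simp only [Set.mem_iInter] at h2
        have hlt : -(j * D : ℝ) < S u ω := h2 u (Finset.mem_range.mpr huv)
        have hge : S u ω ≤ -(j * D : ℝ) := hωu.1
        linarith
      intro u _ v _ huv
      rcases lt_or_gt_of_ne huv with h | h
      · exact key u v h
      · exact (key v u h).symm
    have hmul : ∀ k, k ≤ N → P (C j k ∩ Bev k) = P (C j k) * P (Bev k) := by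
      intro k hkN
      -- independence via tuples
      set s1 := Finset.range k with hs1
      set s2 := Finset.Ico k N with hs2
      have hdisj12 : Disjoint s1 s2 := by
        rw [hs1, Finset.range_eq_Ico]
        exact Finset.Ico_disjoint_Ico_consecutive 0 k N
      have hIF := hindep.indepFun_finset s1 s2 hdisj12 hmeas
      set UC : ℕ → ({x // x ∈ s1} → ℝ) → ℝ := fun w y =>
        ∑ t ∈ s1.attach.filter (fun t : {x // x ∈ s1} => (t:ℕ) ∈ Finset.range w), y t with hUC
      set UB : ℕ → ({x // x ∈ s2} → ℝ) → ℝ := fun u y =>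
        ∑ t ∈ s2.attach.filter (fun t : {x // x ∈ s2} => (t:ℕ) ∈ Finset.Ico k u), y t with hUB
      have hUCmeas : ∀ w, Measurable (UC w) :=
        fun w => Finset.measurable_sum _ (fun t _ => measurable_pi_apply t)
      have hUBmeas : ∀ u, Measurable (UB u) :=
        fun u => Finset.measurable_sum _ (fun t _ => measurable_pi_apply t)
      set MC : Set ({x // x ∈ s1} → ℝ) :=
        {y | UC k y ≤ -(j * D)} ∩ ⋂ k' ∈ Finset.range k, {y | -(j * D) < UC k' y} with hMC
      set MB : Set ({x // x ∈ s2} → ℝ) :=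
        ⋃ u ∈ Finset.Icc k N, {y | (h' - D) ≤ UB u y} with hMB
      have hMCmeas : MeasurableSet MC :=
        (measurableSet_le (hUCmeas k) measurable_const).inter
          (MeasurableSet.biInter (Finset.range k).countable_toSet
            (fun k' _ => measurableSet_lt measurable_const (hUCmeas k')))
      have hMBmeas : MeasurableSet MB :=
        MeasurableSet.biUnion (Finset.Icc k N).countable_toSet
          (fun u _ => measurableSet_le measurable_const (hUBmeas u))
      have hUCval : ∀ w, w ≤ k → ∀ ω, UC w (fun t : {x // x ∈ s1} => ξ (t:ℕ) ω) = S w ω := by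
        intro w hwk ω
        exact sum_attach_filter' s1 (Finset.range w)
          (by rw [hs1]; exact Finset.range_subset_range.mpr hwk) (fun t => ξ t ω)
      have hUBval : ∀ u, u ≤ N → ∀ ω,
          UB u (fun t : {x // x ∈ s2} => ξ (t:ℕ) ω) = ∑ t ∈ Finset.Ico k u, ξ t ω := by
        intro u huN ω
        exact sum_attach_filter' s2 (Finset.Ico k u)
          (by rw [hs2]; exact Finset.Ico_subset_Ico le_rfl huN) (fun t => ξ t ω)
      have hpre1 : (fun ω (t : {x // x ∈ s1}) => ξ (t:ℕ) ω) ⁻¹' MC = C j k := by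
        ext ω
        simp only [hMC, hC, Set.mem_preimage, Set.mem_inter_iff, Set.mem_setOf_eq,
          Set.mem_iInter]
        constructor
        · rintro ⟨h1, h2⟩
          rw [hUCval k le_rfl ω] at h1
          refine ⟨h1, fun k' hk' => ?_⟩
          have h3 := h2 k' hk'
          rwa [hUCval k' (le_of_lt (Finset.mem_range.mp hk')) ω] at h3
        · rintro ⟨h1, h2⟩
          rw [← hUCval k le_rfl ω] at h1
          refine ⟨h1, fun k' hk' => ?_⟩
          have h3 := h2 k' hk'
          rwa [← hUCval k' (le_of_lt (Finset.mem_range.mp hk')) ω] at h3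
      have hpre2 : (fun ω (t : {x // x ∈ s2}) => ξ (t:ℕ) ω) ⁻¹' MB = Bev k := by
        ext ω
        simp only [hMB, hBev, Set.mem_preimage, Set.mem_iUnion, Set.mem_setOf_eq,
          Finset.mem_Icc, exists_prop]
        constructor
        · rintro ⟨u, ⟨h1, h2⟩, h3⟩
          rw [hUBval u h2 ω] at h3
          exact ⟨u, h1, h2, h3⟩
        · rintro ⟨u, h1, h2, h3⟩
          rw [← hUBval u h2 ω] at h3
          exact ⟨u, ⟨h1, h2⟩, h3⟩
      have := hIF.measure_inter_preimage_eq_mul MC MB hMCmeas hMBmeas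
      rwa [hpre1, hpre2] at this
    calc P (F j) ≤ ∑ k ∈ Finset.range (N+1), P (C j k ∩ Bev k) :=
          measure_biUnion_finset_le _ _
      _ ≤ ∑ k ∈ Finset.range (N+1), P (C j k) * ENNReal.ofReal (Real.exp (-(l * (h' - D)))) := by
          refine Finset.sum_le_sum (fun k hk => ?_)
          have hkN : k ≤ N := Nat.lt_succ_iff.mp (Finset.mem_range.mp hk)
          rw [hmul k hkN]
          exact mul_le_mul_right (hville k N hkN (h' - D)) _
      _ = (∑ k ∈ Finset.range (N+1), P (C j k)) * ENNReal.ofReal (Real.exp (-(l * (h' - D)))) :=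
          (Finset.sum_mul _ _ _).symm
      _ ≤ 1 * ENNReal.ofReal (Real.exp (-(l * (h' - D)))) := by
          refine mul_le_mul_left ?_ _
          rw [← measure_biUnion_finset hCdisj (fun k _ => hCmeas j k)]
          exact prob_le_one
      _ = ENNReal.ofReal (Real.exp (-(l * (h' - D)))) := one_mul _
  -- total
  calc P {ω | ∃ i j, i ≤ j ∧ j ≤ N ∧ h' ≤ S j ω - S i ω}
      ≤ P ((⋃ j ∈ Finset.range (K+1), F j) ∪ G) := measure_mono hsub
    _ ≤ P (⋃ j ∈ Finset.range (K+1), F j) + P G := measure_union_le _ _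
    _ ≤ (∑ j ∈ Finset.range (K+1), P (F j)) + P G :=
        add_le_add_left (measure_biUnion_finset_le _ _) _
    _ ≤ (∑ _j ∈ Finset.range (K+1), ENNReal.ofReal (Real.exp (-(l * (h' - D))))) + P G :=
        add_le_add_left (Finset.sum_le_sum (fun j _ => hlevel j)) _
    _ = (K+1) * ENNReal.ofReal (Real.exp (-(l * (h' - D)))) + P G := by
        rw [Finset.sum_const, Finset.card_range, nsmul_eq_mul]
        norm_cast

end Discrete
section GaussMGF

lemma exp_mul_gaussianPDFReal (v : ℝ≥0) (hv : v ≠ 0) (c x : ℝ) :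
    Real.exp (c * x) * gaussianPDFReal 0 v x
      = Real.exp (c ^ 2 * v / 2) * gaussianPDFReal (c * v) v x := by
  have hv' : (0:ℝ) < (v:ℝ) := by
    have := pos_iff_ne_zero.mpr hv
    exact_mod_cast this
  simp only [gaussianPDFReal, sub_zero]
  rw [mul_left_comm, ← Real.exp_add, mul_left_comm, ← Real.exp_add]
  congr 2
  field_simp
  ring

lemma integrable_exp_mul_gaussianReal (v : ℝ≥0) (c : ℝ) :
    Integrable (fun x => Real.exp (c * x)) (gaussianReal 0 v) := by
  rcases eq_or_ne v 0 with rfl | hv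
  · rw [gaussianReal_zero_var]
    constructor
    · exact (Real.measurable_exp.comp (measurable_id.const_mul c)).aestronglyMeasurable
    · rw [HasFiniteIntegral, lintegral_dirac]
      exact ENNReal.coe_lt_top
  · rw [gaussianReal_of_var_ne_zero _ hv]
    rw [integrable_withDensity_iff (measurable_gaussianPDF _ _)
      (ae_of_all _ fun x => ENNReal.ofReal_lt_top)]
    have : (fun x => Real.exp (c*x) * (gaussianPDF 0 v x).toReal)
        = fun x => Real.exp (c^2*v/2) * gaussianPDFReal (c*v) v x := by
      funext x
      rw [gaussianPDF, ENNReal.toReal_ofReal (gaussianPDFReal_nonneg _ _ _),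
        exp_mul_gaussianPDFReal v hv]
    rw [this]
    exact (integrable_gaussianPDFReal _ _).const_mul _

lemma integral_exp_mul_gaussianReal (v : ℝ≥0) (c : ℝ) :
    ∫ x, Real.exp (c * x) ∂(gaussianReal 0 v) = Real.exp (c ^ 2 * v / 2) := by
  rcases eq_or_ne v 0 with rfl | hv
  · simp [gaussianReal_zero_var, integral_dirac]
  · have h0 : gaussianReal 0 v
        = MeasureTheory.volume.withDensity
          (fun x => ((gaussianPDFReal 0 v x).toNNReal : ℝ≥0∞)) := by
      rw [gaussianReal_of_var_ne_zero _ hv]; rfl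
    rw [h0, integral_withDensity_eq_integral_smul
      ((measurable_gaussianPDFReal 0 v).real_toNNReal) _]
    have : (fun x => (Real.toNNReal (gaussianPDFReal 0 v x)) • Real.exp (c * x))
        = fun x => Real.exp (c^2*v/2) * gaussianPDFReal (c*v) v x := by
      funext x
      rw [NNReal.smul_def, smul_eq_mul, Real.coe_toNNReal _ (gaussianPDFReal_nonneg _ _ _),
        mul_comm, exp_mul_gaussianPDFReal v hv]
    rw [this, integral_const_mul, integral_gaussianPDFReal_eq_one _ hv, mul_one]

end GaussMGF

section BM
variable {Ω : Type*} [MeasurableSpace Ω] {P : Measure Ω} [IsProbabilityMeasure P]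
  {W : ℝ → Ω → ℝ}

lemma bm_exp_incr (hW : IsStandardBrownianMotion P W) {x y : ℝ} (hx : 0 ≤ x) (hxy : x ≤ y)
    (c : ℝ) :
    Integrable (fun ω => Real.exp (c * (W y ω - W x ω))) P ∧
      ∫ ω, Real.exp (c * (W y ω - W x ω)) ∂P = Real.exp (c ^ 2 * (y - x) / 2) := by
  have hm : Measurable (fun ω => W y ω - W x ω) := (hW.measurable y).sub (hW.measurable x)
  have hmap := hW.gauss_incr x y hx hxy
  have hg : Measurable fun z : ℝ => Real.exp (c * z) :=
    Real.measurable_exp.comp (measurable_id.const_mul c)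
  have hcoe : ((Real.toNNReal (y - x) : ℝ≥0) : ℝ) = y - x :=
    Real.coe_toNNReal _ (sub_nonneg.mpr hxy)
  constructor
  · have h1 : Integrable (fun z => Real.exp (c * z))
        (Measure.map (fun ω => W y ω - W x ω) P) := by
      rw [hmap]; exact integrable_exp_mul_gaussianReal _ c
    exact (integrable_map_measure hg.aestronglyMeasurable hm.aemeasurable).mp h1
  · have h1 : ∫ ω, Real.exp (c * (W y ω - W x ω)) ∂P
        = ∫ z, Real.exp (c * z) ∂(Measure.map (fun ω => W y ω - W x ω) P) :=
      (integral_map hm.aemeasurable hg.aestronglyMeasurable).symm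
    rw [h1, hmap, integral_exp_mul_gaussianReal, hcoe]

lemma bm_indep_nat (hW : IsStandardBrownianMotion P W) (g : ℕ → ℝ)
    (hg0 : ∀ k, 0 ≤ g k) (hgm : Monotone g) (φ : ℕ → ℝ → ℝ) (hφ : ∀ i, Measurable (φ i)) :
    iIndepFun
      (fun i ω => φ i (W (g (i+1)) ω - W (g i) ω)) P := by
  rw [iIndepFun_iff_measure_inter_preimage_eq_mul]
  intro S sets hsets
  classical
  set n := S.sup id + 1 with hn
  have hlt : ∀ m ∈ S, m < n := fun m hm => Nat.lt_succ_of_le (Finset.le_sup (f := id) hm)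
  have hfin : iIndepFun
      (fun i : Fin n => fun ω => φ (i:ℕ) (W (g ((i:ℕ)+1)) ω - W (g (i:ℕ)) ω)) P := by
    have h0 := hW.indep_incr n (fun i : Fin (n+1) => g (i:ℕ))
      (fun i => hg0 _)
      (fun i j hij => hgm (by exact_mod_cast hij))
    have h1 := h0.comp (fun i : Fin n => φ (i:ℕ)) (fun i => hφ _)
    have e : (fun i : Fin n => φ (i:ℕ)
          ∘ fun ω => W (g ((i.succ : Fin (n+1)) : ℕ)) ω - W (g ((i.castSucc : Fin (n+1)) : ℕ)) ω)
        = fun i : Fin n => fun ω => φ (i:ℕ) (W (g ((i:ℕ)+1)) ω - W (g (i:ℕ)) ω) := by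
      funext i ω
      simp [Fin.val_succ, Fin.coe_castSucc]
    rwa [e] at h1
  have key := hfin.measure_inter_preimage_eq_mul (S.attachFin hlt)
    (sets := fun j : Fin n => sets (j:ℕ))
    (fun j hj => hsets _ ((Finset.mem_attachFin hlt).mp hj))
  have hinter : (⋂ j ∈ S.attachFin hlt,
      (fun ω => φ (j:ℕ) (W (g ((j:ℕ)+1)) ω - W (g (j:ℕ)) ω)) ⁻¹' sets (j:ℕ))
      = ⋂ i ∈ S, (fun ω => φ i (W (g (i+1)) ω - W (g i) ω)) ⁻¹' sets i := by
    ext ω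
    simp only [Set.mem_iInter, Set.mem_preimage, Finset.mem_attachFin]
    constructor
    · intro h i hi
      exact h ⟨i, hlt i hi⟩ hi
    · intro h j hj
      exact h (j:ℕ) hj
  have hprod : (∏ j ∈ S.attachFin hlt,
      P ((fun ω => φ (j:ℕ) (W (g ((j:ℕ)+1)) ω - W (g (j:ℕ)) ω)) ⁻¹' sets (j:ℕ)))
      = ∏ i ∈ S, P ((fun ω => φ i (W (g (i+1)) ω - W (g i) ω)) ⁻¹' sets i) := by
    refine Finset.prod_bij (fun (j : Fin n) _ => (j:ℕ)) ?_ ?_ ?_ ?_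
    · intro j hj
      exact (Finset.mem_attachFin hlt).mp hj
    · intro j1 h1 j2 h2 hval
      exact Fin.val_injective hval
    · intro i hi
      exact ⟨⟨i, hlt i hi⟩, (Finset.mem_attachFin hlt).mpr hi, rfl⟩
    · intro j hj
      rfl
  rw [hinter, hprod] at key
  exact key

end BM
section Det

lemma drawUp_exists_grid (f : ℝ → ℝ) (hf : Continuous f) (B : ℝ) (hB : 0 ≤ B) (h : ℝ)
    (hlt : h < drawUp f 0 B) :
    ∃ m i j : ℕ, i ≤ j ∧ j ≤ 2^m ∧ h ≤ f (B * j / 2^m) - f (B * i / 2^m) := by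
  haveI : Nonempty (Set.Icc (0:ℝ) B) := Set.nonempty_Icc_subtype hB
  obtain ⟨u, hu⟩ := exists_lt_of_lt_ciSup hlt
  obtain ⟨hu0, huB⟩ := u.2
  haveI : Nonempty (Set.Icc (0:ℝ) u.1) := Set.nonempty_Icc_subtype hu0
  obtain ⟨v0, hv0mem, hv0min⟩ :=
    (isCompact_Icc : IsCompact (Set.Icc (0:ℝ) u.1)).exists_isMinOn
      (Set.nonempty_Icc.mpr hu0) hf.continuousOn
  have hinf : (⨅ v : Set.Icc (0:ℝ) u.1, f v.1) = f v0 := by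
    apply le_antisymm
    · apply ciInf_le _ (⟨v0, hv0mem⟩ : Set.Icc (0:ℝ) u.1)
      refine ⟨f v0, ?_⟩
      rintro z ⟨w, rfl⟩
      exact hv0min w.2
    · exact le_ciInf (fun w => hv0min w.2)
  rw [hinf] at hu
  -- now h < f u.1 - f v0, with v0 ∈ [0, u.1]
  rcases eq_or_lt_of_le hB with hB0 | hBpos
  · -- B = 0
    refine ⟨0, 0, 0, le_rfl, by norm_num, ?_⟩
    have hu1 : u.1 = 0 := le_antisymm (hB0 ▸ huB) hu0
    have hv1 : v0 = 0 := le_antisymm (hu1 ▸ hv0mem.2) hv0mem.1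
    have : h < 0 := by rw [hu1, hv1] at hu; simpa using hu
    simp only [mul_zero, Nat.cast_zero, zero_div]
    linarith
  -- B > 0
  set ε0 := (f u.1 - f v0 - h) / 2 with hε0
  have hε0pos : 0 < ε0 := by simp only [hε0]; linarith
  obtain ⟨δ1, hδ1pos, hδ1⟩ := Metric.continuous_iff.mp hf u.1 ε0 hε0pos
  obtain ⟨δ2, hδ2pos, hδ2⟩ := Metric.continuous_iff.mp hf v0 ε0 hε0pos
  set δ := min δ1 δ2 with hδ
  have hδpos : 0 < δ := lt_min hδ1pos hδ2pos
  obtain ⟨m, hm⟩ := pow_unbounded_of_one_lt (B / δ) (by norm_num : (1:ℝ) < 2)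
  have h2m : (0:ℝ) < 2^m := by positivity
  have hmesh : B / 2^m < δ := by
    rw [div_lt_iff₀ h2m]
    rw [div_lt_iff₀ hδpos] at hm
    linarith [hm]
  set j := ⌊u.1 * 2^m / B⌋₊ with hj
  set i := ⌊v0 * 2^m / B⌋₊ with hi
  have hval : ∀ (w : ℝ), 0 ≤ w → w ≤ B →
      0 ≤ w - B * (⌊w * 2^m / B⌋₊ : ℝ) / 2^m ∧ w - B * (⌊w * 2^m / B⌋₊ : ℝ) / 2^m < δ := by
    intro w hw0 hwB
    have hfl : (⌊w * 2^m / B⌋₊ : ℝ) ≤ w * 2^m / B := Nat.floor_le (by positivity)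
    have hfu : w * 2^m / B < (⌊w * 2^m / B⌋₊ : ℝ) + 1 := Nat.lt_floor_add_one _
    constructor
    · have : B * (⌊w * 2^m / B⌋₊ : ℝ) ≤ w * 2^m := by
        rw [mul_comm]
        exact (le_div_iff₀ hBpos).mp hfl
      rw [sub_nonneg, div_le_iff₀ h2m]
      linarith
    · have : w * 2^m < B * ((⌊w * 2^m / B⌋₊ : ℝ) + 1) := by
        rw [mul_comm B]
        exact (div_lt_iff₀ hBpos).mp hfu
      have h1 : w - B * (⌊w * 2^m / B⌋₊ : ℝ) / 2^m < B / 2^m := by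
        rw [sub_lt_iff_lt_add, ← add_div, lt_div_iff₀ h2m]
        linarith
      linarith
  have hji : i ≤ j := by
    apply Nat.floor_le_floor
    have := hv0mem.2
    gcongr
  have hjN : j ≤ 2^m := by
    apply Nat.floor_le_of_le
    rw [div_le_iff₀ hBpos]
    push_cast
    calc u.1 * 2^m ≤ B * 2^m := by nlinarith
      _ = 2^m * B := by ring
  refine ⟨m, i, j, hji, hjN, ?_⟩
  obtain ⟨hj0, hjδ⟩ := hval u.1 hu0 huB
  obtain ⟨hi0, hiδ⟩ := hval v0 hv0mem.1 (le_trans hv0mem.2 huB)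
  have hdj : dist (B * (j:ℝ) / 2^m) u.1 < δ1 := by
    rw [Real.dist_eq, abs_sub_comm, abs_of_nonneg hj0]
    exact lt_of_lt_of_le hjδ (min_le_left _ _)
  have hdi : dist (B * (i:ℝ) / 2^m) v0 < δ2 := by
    rw [Real.dist_eq, abs_sub_comm, abs_of_nonneg hi0]
    exact lt_of_lt_of_le hiδ (min_le_right _ _)
  have hfj := hδ1 _ hdj
  have hfi := hδ2 _ hdi
  rw [Real.dist_eq] at hfj hfi
  have h1 : f (B * (j:ℝ) / 2^m) > f u.1 - ε0 := by
    have := abs_lt.mp hfj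
    linarith [this.1]
  have h2 : f (B * (i:ℝ) / 2^m) < f v0 + ε0 := by
    have := abs_lt.mp hfi
    linarith [this.2]
  have : f u.1 - f v0 = h + 2 * ε0 := by rw [hε0]; ring
  linarith

lemma drift_comp {α B b x y : ℝ} (hα : 0 < α) (hα2 : α < 1) (hb : 0 < b) (hB : 0 < B)
    (hx : 0 ≤ x) (hxy : x ≤ y) (hyB : y ≤ B) :
    (b / B ^ α) * (y - x) ≤ (b / (1 - α)) * (y ^ (1 - α) - x ^ (1 - α)) := by
  have hy : 0 ≤ y := le_trans hx hxy
  rcases eq_or_lt_of_le hy with hy0 | hy0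
  · have hx0 : x = 0 := le_antisymm (hy0 ▸ hxy) hx
    rw [← hy0, ← hx0]
    simp
  have hyα : (0:ℝ) < y ^ α := Real.rpow_pos_of_pos hy0 α
  have hBα : (0:ℝ) < B ^ α := Real.rpow_pos_of_pos hB α
  have hgm : x ^ (1 - α) * y ^ α ≤ (1 - α) * x + α * y :=
    Real.geom_mean_le_arith_mean2_weighted (by linarith) (le_of_lt hα) hx hy (by ring)
  have hy1 : y ^ (1 - α) = y / y ^ α := by
    rw [eq_div_iff (ne_of_gt hyα), ← Real.rpow_add hy0]
    norm_num
  have hx1 : x ^ (1 - α) ≤ ((1 - α) * x + α * y) / y ^ α := by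
    rw [le_div_iff₀ hyα]
    exact hgm
  have hkey : (1 - α) * (y - x) / y ^ α ≤ y ^ (1 - α) - x ^ (1 - α) := by
    rw [hy1]
    have : y / y ^ α - ((1 - α) * x + α * y) / y ^ α = (1 - α) * (y - x) / y ^ α := by
      rw [div_sub_div_same]
      congr 1
      ring
    linarith [hx1, this]
  have hmono : (1 - α) * (y - x) / B ^ α ≤ (1 - α) * (y - x) / y ^ α := by
    apply div_le_div_of_nonneg_left _ hyα (Real.rpow_le_rpow hy hyB (le_of_lt hα))
    · exact mul_nonneg (by linarith) (by linarith)
  have hfinal : (1 - α) * (y - x) / B ^ α ≤ y ^ (1 - α) - x ^ (1 - α) :=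
    le_trans hmono hkey
  have h1α : (1:ℝ) - α ≠ 0 := by linarith
  have hBα' : B ^ α ≠ 0 := ne_of_gt hBα
  calc (b / B ^ α) * (y - x) = (b / (1 - α)) * ((1 - α) * (y - x) / B ^ α) := by
        field_simp
    _ ≤ (b / (1 - α)) * (y ^ (1 - α) - x ^ (1 - α)) := by
        apply mul_le_mul_of_nonneg_left hfinal
        exact div_nonneg (le_of_lt hb) (by linarith)

end Det
section PerN
variable {Ω : Type*} [MeasurableSpace Ω] {P : Measure Ω} [IsProbabilityMeasure P]
  {W : ℝ → Ω → ℝ}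

lemma perN (hW : IsStandardBrownianMotion P W) (σ b α : ℝ) (hσ : 0 < σ) (hb : 0 < b)
    (hα1 : 0 < α) (hα2 : α < 1) (B thr : ℝ) (hB : 0 < B) (hthr : 0 < thr) (K : ℕ)
    (hK : 2 * (b / B ^ α) * B ≤ (K:ℝ) * (σ^2 / (2 * (b / B ^ α)))) :
    P {ω | thr < drawUp (Vfun σ b α (fun s => W s ω)) 0 B}
      ≤ ((K:ℝ≥0∞)+1) * ENNReal.ofReal
          (Real.exp (-((2 * (b / B ^ α) / σ^2) * (thr - σ^2 / (2 * (b / B ^ α))))))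
        + ENNReal.ofReal (Real.exp (-((b / B ^ α)^2 * B / (2 * σ^2)))) := by
  classical
  set m : ℝ := b / B ^ α with hm
  have hBα : (0:ℝ) < B ^ α := Real.rpow_pos_of_pos hB α
  have hmpos : 0 < m := div_pos hb hBα
  set l : ℝ := 2 * m / σ^2 with hl
  have hlpos : 0 < l := by positivity
  set D : ℝ := σ^2 / (2 * m) with hD
  have hDpos : 0 < D := by positivity
  -- continuity of V
  have hVcont : ∀ ω, Continuous (Vfun σ b α (fun s => W s ω)) := by
    intro ω
    apply Continuous.sub
    · exact continuous_const.mul (hW.cont ω)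
    · apply continuous_const.mul
      rw [continuous_iff_continuousAt]
      intro x
      exact Real.continuousAt_rpow_const x (1-α) (Or.inr (by linarith))
  -- the grid events
  set E : ℕ → Set Ω := fun mg => ⋃ j ∈ Finset.range (2^mg+1), ⋃ i ∈ Finset.range (j+1),
    {ω | thr ≤ Vfun σ b α (fun s => W s ω) (B * j / 2^mg)
      - Vfun σ b α (fun s => W s ω) (B * i / 2^mg)} with hE
  have hVmeas : ∀ x : ℝ, Measurable (fun ω => Vfun σ b α (fun s => W s ω) x) := by
    intro x
    unfold Vfun
    exact ((hW.measurable x).const_mul σ).sub measurable_const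
  have hEmeas : ∀ mg, MeasurableSet (E mg) := by
    intro mg
    refine MeasurableSet.biUnion (Finset.range (2^mg+1)).countable_toSet (fun j _ => ?_)
    refine MeasurableSet.biUnion (Finset.range (j+1)).countable_toSet (fun i _ => ?_)
    exact measurableSet_le measurable_const ((hVmeas _).sub (hVmeas _))
  have hEmono : Monotone E := by
    apply monotone_nat_of_le_succ
    intro mg
    intro ω hω
    simp only [hE, Set.mem_iUnion, Set.mem_setOf_eq, exists_prop] at hω ⊢
    obtain ⟨j, hj, i, hi, hval⟩ := hω
    refine ⟨2*j, ?_, 2*i, ?_, ?_⟩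
    · rw [Finset.mem_range] at hj ⊢
      rw [pow_succ]
      omega
    · rw [Finset.mem_range] at hi ⊢
      omega
    · have e1 : B * (2*j : ℕ) / 2^(mg+1) = B * j / 2^mg := by
        push_cast
        rw [pow_succ]
        field_simp
      have e2 : B * (2*i : ℕ) / 2^(mg+1) = B * i / 2^mg := by
        push_cast
        rw [pow_succ]
        field_simp
      rw [e1, e2]
      exact hval
  have hsub : {ω | thr < drawUp (Vfun σ b α (fun s => W s ω)) 0 B} ⊆ ⋃ mg, E mg := by
    intro ω hω
    obtain ⟨mg, i, j, hij, hjN, hval⟩ :=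
      drawUp_exists_grid _ (hVcont ω) B (le_of_lt hB) thr hω
    refine Set.mem_iUnion.mpr ⟨mg, ?_⟩
    simp only [hE, Set.mem_iUnion, Set.mem_setOf_eq, exists_prop]
    exact ⟨j, Finset.mem_range.mpr (by omega), i, Finset.mem_range.mpr (by omega), hval⟩
  -- the per-grid bound
  have hgrid : ∀ mg : ℕ, P (E mg)
      ≤ ((K:ℝ≥0∞)+1) * ENNReal.ofReal (Real.exp (-(l * (thr - D))))
        + ENNReal.ofReal (Real.exp (-(m^2 * B / (2 * σ^2)))) := by
    intro mg
    set N : ℕ := 2^mg with hN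
    have hNpos : 0 < N := by rw [hN]; positivity
    have hNR : (0:ℝ) < (N:ℝ) := by exact_mod_cast hNpos
    set gg : ℕ → ℝ := fun k => B * ((min k N : ℕ):ℝ) / (N:ℝ) with hgg
    have hgg0 : ∀ k, 0 ≤ gg k := by
      intro k
      simp only [hgg]
      positivity
    have hggm : Monotone gg := by
      intro k k' hkk'
      simp only [hgg]
      have hmin : ((min k N : ℕ):ℝ) ≤ ((min k' N : ℕ):ℝ) :=
        Nat.cast_le.mpr (min_le_min hkk' le_rfl)
      gcongr
    have hggB : ∀ k, gg k ≤ B := by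
      intro k
      simp only [hgg]
      rw [div_le_iff₀ hNR]
      have h1 : ((min k N : ℕ):ℝ) ≤ (N:ℝ) := Nat.cast_le.mpr (min_le_right _ _)
      nlinarith
    have hgg_eq : ∀ k, k ≤ N → gg k = B * k / N := by
      intro k hk; simp only [hgg, min_eq_left hk]
    have hgg_zero : gg 0 = 0 := by simp [hgg]
    -- generic telescoping
    have htelgen : ∀ (c c' : ℝ) (ω : Ω) (jj : ℕ),
        (∑ t ∈ Finset.range jj,
          (c * (W (gg (t+1)) ω - W (gg t) ω) - c' * (gg (t+1) - gg t)))
          = c * W (gg jj) ω - c' * gg jj := by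
      intro c c' ω jj
      have hsum := Finset.sum_range_sub (f := fun k => c * W (gg k) ω - c' * gg k) jj
      calc (∑ t ∈ Finset.range jj,
            (c * (W (gg (t+1)) ω - W (gg t) ω) - c' * (gg (t+1) - gg t)))
          = ∑ t ∈ Finset.range jj, ((fun k => c * W (gg k) ω - c' * gg k) (t+1)
              - (fun k => c * W (gg k) ω - c' * gg k) t) := by
            refine Finset.sum_congr rfl (fun t _ => by simp only; ring)
        _ = (c * W (gg jj) ω - c' * gg jj) - (c * W (gg 0) ω - c' * gg 0) := hsum
        _ = c * W (gg jj) ω - c' * gg jj := by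
            rw [hgg_zero, hW.init ω]; ring
    -- generic step mgf
    have hstep : ∀ (c c' : ℝ) (i : ℕ),
        Integrable (fun ω => Real.exp (c * (W (gg (i+1)) ω - W (gg i) ω) + c')) P ∧
        ∫ ω, Real.exp (c * (W (gg (i+1)) ω - W (gg i) ω) + c') ∂P
          = Real.exp (c^2 * (gg (i+1) - gg i) / 2 + c') := by
      intro c c' i
      have hbase := bm_exp_incr hW (hgg0 i) (hggm (Nat.le_succ i)) c
      have he : (fun ω => Real.exp (c * (W (gg (i+1)) ω - W (gg i) ω) + c'))
          = fun ω => Real.exp (c * (W (gg (i+1)) ω - W (gg i) ω)) * Real.exp c' := by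
        funext ω; rw [Real.exp_add]
      constructor
      · rw [he]; exact hbase.1.mul_const _
      · rw [he, integral_mul_const, hbase.2, ← Real.exp_add]
    -- the tilted walk ξ
    set ξ : ℕ → Ω → ℝ := fun i ω =>
      σ * (W (gg (i+1)) ω - W (gg i) ω) - m * (gg (i+1) - gg i) with hξ
    have hmeasξ : ∀ i, Measurable (ξ i) := by
      intro i
      exact (((hW.measurable _).sub (hW.measurable _)).const_mul σ).sub_const _
    have hindepξ : iIndepFun ξ P :=
      bm_indep_nat hW gg hgg0 hggm (fun i x => σ * x - m * (gg (i+1) - gg i))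
        (fun i => (measurable_id.const_mul σ).sub_const _)
    have hintξ : ∀ i, Integrable (fun ω => Real.exp (l * ξ i ω)) P := by
      intro i
      have he : (fun ω => Real.exp (l * ξ i ω))
          = fun ω => Real.exp ((l*σ) * (W (gg (i+1)) ω - W (gg i) ω)
              + (-(l * m * (gg (i+1) - gg i)))) := by
        funext ω; congr 1; simp only [hξ]; ring
      rw [he]; exact (hstep _ _ i).1
    have hmeanξ : ∀ i, ∫ ω, Real.exp (l * ξ i ω) ∂P = 1 := by
      intro i
      have he : (fun ω => Real.exp (l * ξ i ω))
          = fun ω => Real.exp ((l*σ) * (W (gg (i+1)) ω - W (gg i) ω)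
              + (-(l * m * (gg (i+1) - gg i)))) := by
        funext ω; congr 1; simp only [hξ]; ring
      rw [he, (hstep _ _ i).2]
      have hz : (l*σ)^2 * (gg (i+1) - gg i)/2 + (-(l * m * (gg (i+1) - gg i))) = 0 := by
        have hσ2 : σ^2 ≠ 0 := by positivity
        simp only [hl]
        field_simp
        ring
      rw [hz, Real.exp_zero]
    have hpe : ∀ k u : ℕ, k ≤ u →
        Integrable (fun ω => Real.exp (l * ∑ i ∈ Finset.Ico k u, ξ i ω)) P ∧
        ∫ ω, Real.exp (l * ∑ i ∈ Finset.Ico k u, ξ i ω) ∂P = 1 :=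
      fun k u hku => prod_exp_aux hmeasξ hindepξ hintξ hmeanξ k u hku
    have hville1 : ∀ (k N' : ℕ), k ≤ N' → ∀ a : ℝ,
        P {ω | ∃ u, k ≤ u ∧ u ≤ N' ∧ a ≤ ∑ i ∈ Finset.Ico k u, ξ i ω}
          ≤ ENNReal.ofReal (Real.exp (-(l * a))) :=
      fun k N' hk a => ville hmeasξ hindepξ hintξ hmeanξ (le_of_lt hlpos) hpe k N' hk a
    have hStel : ∀ (ω : Ω) (jj : ℕ),
        (∑ t ∈ Finset.range jj, ξ t ω) = σ * W (gg jj) ω - m * gg jj := by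
      intro ω jj
      exact htelgen σ m ω jj
    -- inclusion of the grid event in the pair event for ξ
    have hsubD : E mg ⊆ {ω | ∃ i j, i ≤ j ∧ j ≤ N ∧
        thr ≤ (∑ t ∈ Finset.range j, ξ t ω) - ∑ t ∈ Finset.range i, ξ t ω} := by
      intro ω hω
      simp only [hE, Set.mem_iUnion, Set.mem_setOf_eq, exists_prop] at hω
      obtain ⟨j, hj, i, hi, hval⟩ := hω
      rw [Finset.mem_range] at hj hi
      have hjN : j ≤ N := by omega
      have hij : i ≤ j := Nat.lt_succ_iff.mp hi
      refine ⟨i, j, hij, hjN, ?_⟩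
      rw [hStel ω j, hStel ω i]
      have hcast : ((N:ℕ):ℝ) = (2:ℝ)^mg := by rw [hN]; push_cast; ring
      have hgj : gg j = B * j / 2^mg := by rw [hgg_eq j hjN, hcast]
      have hgi : gg i = B * i / 2^mg := by rw [hgg_eq i (le_trans hij hjN), hcast]
      rw [← hgj, ← hgi] at hval
      have hd := drift_comp hα1 hα2 hb hB (hgg0 i) (hggm hij) (hggB j)
      have hV : Vfun σ b α (fun s => W s ω) (gg j) - Vfun σ b α (fun s => W s ω) (gg i)
          ≤ (σ * W (gg j) ω - m * gg j) - (σ * W (gg i) ω - m * gg i) := by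
        unfold Vfun
        simp only [hm] at *
        linarith [hd]
      linarith [hval, hV]
    -- second walk for the G event
    set θ : ℝ := m / σ^2 with hθ
    have hθpos : 0 < θ := by positivity
    set ξ'' : ℕ → Ω → ℝ := fun i ω => (-(θ*σ)) * (W (gg (i+1)) ω - W (gg i) ω)
      - (θ^2 * σ^2 / 2) * (gg (i+1) - gg i) with hξ''
    have hmeas'' : ∀ i, Measurable (ξ'' i) := by
      intro i
      exact (((hW.measurable _).sub (hW.measurable _)).const_mul _).sub_const _
    have hindep'' : iIndepFun ξ'' P :=
      bm_indep_nat hW gg hgg0 hggm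
        (fun i x => (-(θ*σ)) * x - (θ^2 * σ^2 / 2) * (gg (i+1) - gg i))
        (fun i => (measurable_id.const_mul _).sub_const _)
    have hint'' : ∀ i, Integrable (fun ω => Real.exp (1 * ξ'' i ω)) P := by
      intro i
      have he : (fun ω => Real.exp (1 * ξ'' i ω))
          = fun ω => Real.exp ((-(θ*σ)) * (W (gg (i+1)) ω - W (gg i) ω)
              + (-((θ^2 * σ^2 / 2) * (gg (i+1) - gg i)))) := by
        funext ω; congr 1; simp only [hξ'']; ring
      rw [he]; exact (hstep _ _ i).1
    have hmean'' : ∀ i, ∫ ω, Real.exp (1 * ξ'' i ω) ∂P = 1 := by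
      intro i
      have he : (fun ω => Real.exp (1 * ξ'' i ω))
          = fun ω => Real.exp ((-(θ*σ)) * (W (gg (i+1)) ω - W (gg i) ω)
              + (-((θ^2 * σ^2 / 2) * (gg (i+1) - gg i)))) := by
        funext ω; congr 1; simp only [hξ'']; ring
      rw [he, (hstep _ _ i).2]
      have hz : (-(θ*σ))^2 * (gg (i+1) - gg i)/2
          + (-((θ^2 * σ^2 / 2) * (gg (i+1) - gg i))) = 0 := by ring
      rw [hz, Real.exp_zero]
    have hpe'' : ∀ k u : ℕ, k ≤ u →
        Integrable (fun ω => Real.exp (1 * ∑ i ∈ Finset.Ico k u, ξ'' i ω)) P ∧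
        ∫ ω, Real.exp (1 * ∑ i ∈ Finset.Ico k u, ξ'' i ω) ∂P = 1 :=
      fun k u hku => prod_exp_aux hmeas'' hindep'' hint'' hmean'' k u hku
    have hville2 := ville hmeas'' hindep'' hint'' hmean'' zero_le_one hpe'' 0 N
      (Nat.zero_le N) (m^2 * B / (2 * σ^2))
    have hsubG : {ω | ∃ i, i ≤ N ∧ (∑ t ∈ Finset.range i, ξ t ω) ≤ -((K:ℝ) * D)} ⊆
        {ω | ∃ u, 0 ≤ u ∧ u ≤ N ∧ m^2*B/(2*σ^2) ≤ ∑ t ∈ Finset.Ico 0 u, ξ'' t ω} := by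
      intro ω hω
      obtain ⟨i, hiN, hSi⟩ := hω
      rw [hStel ω i] at hSi
      have htel'' : (∑ t ∈ Finset.Ico 0 i, ξ'' t ω)
          = (-(θ*σ)) * W (gg i) ω - (θ^2 * σ^2 / 2) * gg i := by
        rw [Nat.Ico_zero_eq_range]
        exact htelgen (-(θ*σ)) (θ^2 * σ^2 / 2) ω i
      refine ⟨i, Nat.zero_le i, hiN, ?_⟩
      rw [htel'']
      have hKD : 2 * m * B ≤ (K:ℝ) * D := hK
      have hmgg : m * gg i ≤ m * B := mul_le_mul_of_nonneg_left (hggB i) hmpos.le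
      have h1 : σ * W (gg i) ω ≤ -(m * B) := by linarith
      have t1 : θ * (σ * W (gg i) ω) ≤ θ * (-(m * B)) :=
        mul_le_mul_of_nonneg_left h1 hθpos.le
      have hc : (0:ℝ) ≤ θ^2 * σ^2 / 2 := by positivity
      have t2 : (θ^2 * σ^2 / 2) * gg i ≤ (θ^2 * σ^2 / 2) * B :=
        mul_le_mul_of_nonneg_left (hggB i) hc
      have e4 : θ * (m * B) - (θ^2 * σ^2 / 2) * B = m^2 * B / (2 * σ^2) := by
        rw [hθ]; field_simp; ring
      nlinarith [t1, t2, e4]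
    have hlev := level hmeasξ hindepξ (le_of_lt hlpos) hville1 N K thr D hthr hDpos
    calc P (E mg)
        ≤ P {ω | ∃ i j, i ≤ j ∧ j ≤ N ∧
            thr ≤ (∑ t ∈ Finset.range j, ξ t ω) - ∑ t ∈ Finset.range i, ξ t ω} :=
          measure_mono hsubD
      _ ≤ (K+1) * ENNReal.ofReal (Real.exp (-(l * (thr - D))))
          + P {ω | ∃ i, i ≤ N ∧ (∑ t ∈ Finset.range i, ξ t ω) ≤ -((K:ℝ) * D)} := hlev
      _ ≤ (K+1) * ENNReal.ofReal (Real.exp (-(l * (thr - D))))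
          + ENNReal.ofReal (Real.exp (-(1 * (m^2 * B / (2 * σ^2))))) :=
          add_le_add_right (le_trans (measure_mono hsubG) hville2) _
      _ = ((K:ℝ≥0∞)+1) * ENNReal.ofReal (Real.exp (-(l * (thr - D))))
          + ENNReal.ofReal (Real.exp (-(m^2 * B / (2 * σ^2)))) := by
          rw [one_mul]
  calc P {ω | thr < drawUp (Vfun σ b α (fun s => W s ω)) 0 B}
      ≤ P (⋃ mg, E mg) := measure_mono hsub
    _ = ⨆ mg, P (E mg) := (hEmono.directed_le).measure_iUnion
    _ ≤ ((K:ℝ≥0∞)+1) * ENNReal.ofReal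
          (Real.exp (-(l * (thr - D))))
        + ENNReal.ofReal (Real.exp (-(m^2 * B / (2 * σ^2)))) := iSup_le hgrid

end PerN

set_option maxHeartbeats 2000000 in
/-- summability of the probabilities of a large draw-up of V on
[0, (1-ε)s(t_n)] along the doubly exponential sequence t_n = exp((1+μ)^n). -/
theorem summable_prob_drawUp_V
    {Ω : Type*} [MeasurableSpace Ω] (P : Measure Ω) [IsProbabilityMeasure P]
    (W : ℝ → Ω → ℝ) (hW : IsStandardBrownianMotion P W)
    (σ b α : ℝ) (hσ : 0 < σ) (hb : 0 < b) (hα : α ∈ Set.Ioo (0 : ℝ) (1 / 2))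
    (ε δ μ : ℝ) (hε : ε ∈ Set.Ioo (0 : ℝ) 1) (hδ : 0 < δ)
    (hδ' : 2 * δ < 1 - (1 - ε) ^ α) (hμ : 0 < μ) :
    (∑' n : ℕ,
      P {ω | (1 - 2 * δ) * Real.log (Real.exp ((1 + μ) ^ n)) <
        drawUp (Vfun σ b α (fun s => W s ω)) 0
          ((1 - ε) * sFun σ b α (Real.exp ((1 + μ) ^ n)))}) < ⊤ := by
  obtain ⟨hα1, hα2⟩ := hα
  obtain ⟨hε1, hε2⟩ := hε
  have hα2' : α < 1 := by linarith
  have h12α : 0 < 1 - 2*α := by linarith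
  have h1ε : 0 < 1 - ε := by linarith
  set lgμ : ℝ := Real.log (1+μ) with hlgμeq
  have hlgμ : 0 < lgμ := Real.log_pos (by linarith)
  set Cst : ℝ := 2 * α * b / (σ^2 * (1 - 2*α)) with hCsteq
  have hCstpos : 0 < Cst :=
    div_pos (by positivity) (mul_pos (by positivity) h12α)
  set β : ℝ := (1-2*α)/α with hβeq
  have hβpos : 0 < β := div_pos h12α hα1
  have hβ2eq : 1/α = β + 2 := by rw [hβeq]; field_simp; ring
  set ratio : ℝ := (1-2*δ)/((1-ε)^α) with hratioeq
  have hεα : 0 < (1-ε)^α := Real.rpow_pos_of_pos h1ε α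
  have hεα1 : (1-ε)^α < 1 - 2*δ := by linarith
  have h2δ : 0 < 1 - 2*δ := lt_trans hεα hεα1
  have hratio1 : 1 < ratio := (one_lt_div hεα).mpr hεα1
  have hratiopos : 0 < ratio := lt_trans one_pos hratio1
  set y : ℝ := Real.exp (β * lgμ) with hyeq
  set z : ℝ := Real.exp (-(β * ratio * lgμ)) with hzeq
  set w : ℝ := Real.exp (-(β * lgμ)) with hweq
  set q : ℝ := Real.exp (-(β * (ratio - 1) * lgμ)) with hqeq
  have hz1 : z < 1 := by
    rw [hzeq, Real.exp_lt_one_iff]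
    have : 0 < β * ratio * lgμ := by positivity
    linarith
  have hw1 : w < 1 := by
    rw [hweq, Real.exp_lt_one_iff]
    have : 0 < β * lgμ := by positivity
    linarith
  have hq1 : q < 1 := by
    rw [hqeq, Real.exp_lt_one_iff]
    have h0 : 0 < ratio - 1 := by linarith
    have : 0 < β * (ratio - 1) * lgμ := by positivity
    linarith
  have hz0 : 0 < z := Real.exp_pos _
  have hw0 : 0 < w := Real.exp_pos _
  have hq0 : 0 < q := Real.exp_pos _
  set κ : ℕ := ⌈β⌉₊ with hκeq
  set c5 : ℝ := b^2 * (1-ε) / ((1-ε)^α)^2 with hc5eq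
  have hc5pos : 0 < c5 := by positivity
  set c7 : ℝ := (Cst/lgμ)^β with hc7eq
  have hc7pos : 0 < c7 := Real.rpow_pos_of_pos (by positivity) β
  set A : ℝ := 4*c5*c7/σ^2 with hAeq
  have hApos : 0 < A := by positivity
  set C1 : ℝ := A * Real.exp 1 with hC1eq
  set C2 : ℝ := 2 * Real.exp 1 with hC2eq
  set C3 : ℝ := 2*σ^2/(c5*c7) with hC3eq
  have hC1pos : 0 < C1 := by positivity
  have hC2pos : 0 < C2 := by positivity
  have hC3pos : 0 < C3 := by positivity
  -- the key per-n bound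
  have key : ∀ n : ℕ, 1 ≤ n →
      P {ω | (1 - 2 * δ) * Real.log (Real.exp ((1 + μ) ^ n)) <
        drawUp (Vfun σ b α (fun s => W s ω)) 0
          ((1 - ε) * sFun σ b α (Real.exp ((1 + μ) ^ n)))}
      ≤ ENNReal.ofReal (C1 * q^n + C2 * z^n + C3 * ((n:ℝ)^κ * w^n)) := by
    intro n hn
    have hnR : (1:ℝ) ≤ (n:ℝ) := by exact_mod_cast hn
    have hnpos : (0:ℝ) < (n:ℝ) := by linarith
    set L : ℝ := (1+μ)^n with hLeq
    have hL0 : (0:ℝ) < L := by positivity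
    have hlogE : Real.log (Real.exp L) = L := Real.log_exp L
    have hlogL : Real.log L = (n:ℝ) * lgμ := by
      rw [hLeq, Real.log_pow, hlgμeq]
    have hnlg : 0 < (n:ℝ) * lgμ := by positivity
    set X : ℝ := Cst * ((n:ℝ) * lgμ)⁻¹ * L with hXeq
    have hXpos : 0 < X := by positivity
    have hsFun : sFun σ b α (Real.exp L) = X ^ (1/α) := by
      rw [sFun, hlogE, hlogL, hXeq, hCsteq]
    have hX1α : 0 < X^(1/α) := Real.rpow_pos_of_pos hXpos _
    have hBpos : 0 < (1-ε) * X^(1/α) := mul_pos h1ε hX1α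
    have hBα : ((1-ε) * X^(1/α)) ^ α = (1-ε)^α * X := by
      rw [Real.mul_rpow h1ε.le hX1α.le, ← Real.rpow_mul hXpos.le,
        one_div_mul_cancel (ne_of_gt hα1), Real.rpow_one]
    set M : ℝ := b / ((1-ε)^α * X) with hMeq
    have hMpos : 0 < M := div_pos hb (mul_pos hεα hXpos)
    have hbB : b / ((1-ε) * X^(1/α)) ^ α = M := by rw [hBα, hMeq]
    have hthrpos : 0 < (1-2*δ) * L := mul_pos h2δ hL0
    set K : ℕ := ⌈4 * (M^2 * ((1-ε) * X^(1/α))) / σ^2⌉₊ with hKeq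
    have hKprop : 2 * (b / ((1-ε) * X^(1/α)) ^ α) * ((1-ε) * X^(1/α))
        ≤ (K:ℝ) * (σ^2 / (2 * (b / ((1-ε) * X^(1/α)) ^ α))) := by
      rw [hbB]
      have h1 : 4 * (M^2 * ((1-ε) * X^(1/α))) / σ^2 ≤ (K:ℝ) := Nat.le_ceil _
      have h2 : (0:ℝ) < σ^2/(2*M) := by positivity
      calc 2 * M * ((1-ε) * X^(1/α))
          = (4 * (M^2 * ((1-ε) * X^(1/α))) / σ^2) * (σ^2/(2*M)) := by
            field_simp
            ring
        _ ≤ (K:ℝ) * (σ^2/(2*M)) := mul_le_mul_of_nonneg_right h1 h2.le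
    have hper := perN hW σ b α hσ hb hα1 hα2' ((1-ε) * X^(1/α)) ((1-2*δ) * L)
      hBpos hthrpos K hKprop
    rw [hbB] at hper
    -- identities
    have hMBval : M^2 * ((1-ε) * X^(1/α)) = c5 * X^β := by
      have h2 : X^(1/α) = X^β * X^2 := by
        rw [hβ2eq, Real.rpow_add hXpos, Real.rpow_two]
      rw [hMeq, h2, hc5eq]
      have hXβpos : 0 < X^β := Real.rpow_pos_of_pos hXpos β
      field_simp
    have hlthr : (2 * M / σ^2) * ((1-2*δ) * L) = β * ratio * ((n:ℝ) * lgμ) := by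
      rw [hMeq, hXeq, hCsteq, hβeq, hratioeq]
      have h1 : ((n:ℝ) * lgμ) ≠ 0 := ne_of_gt hnlg
      have h2 : (1-ε)^α ≠ 0 := ne_of_gt hεα
      field_simp
    have hlD : (2 * M / σ^2) * (σ^2 / (2 * M)) = 1 := by
      field_simp
    have hLβ : L ^ β = Real.exp (β * ((n:ℝ) * lgμ)) := by
      rw [Real.rpow_def_of_pos hL0, hlogL]
      ring_nf
    have hXβval : X^β = c7 * (L^β / (n:ℝ)^β) := by
      have hXalt : X = (Cst/lgμ) * (L / (n:ℝ)) := by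
        rw [hXeq]
        field_simp
      rw [hXalt, Real.mul_rpow (by positivity) (by positivity),
        Real.div_rpow hL0.le hnpos.le, hc7eq]
    have hnβ1 : (1:ℝ) ≤ (n:ℝ)^β := by
      calc (1:ℝ) = 1 ^ β := (Real.one_rpow β).symm
        _ ≤ (n:ℝ)^β := Real.rpow_le_rpow zero_le_one hnR hβpos.le
    have hXβub : X^β ≤ c7 * L^β := by
      rw [hXβval]
      have : L^β / (n:ℝ)^β ≤ L^β := by
        apply div_le_self (Real.rpow_nonneg hL0.le β) hnβ1
      exact mul_le_mul_of_nonneg_left this hc7pos.le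
    have hyn : y^n = Real.exp (β * ((n:ℝ) * lgμ)) := by
      rw [hyeq, ← Real.exp_nat_mul]
      ring_nf
    have hzn : z^n = Real.exp (-((2 * M / σ^2) * ((1-2*δ) * L))) := by
      rw [hlthr, hzeq, ← Real.exp_nat_mul]
      ring_nf
    have hwn : w^n = Real.exp (-(β * ((n:ℝ) * lgμ))) := by
      rw [hweq, ← Real.exp_nat_mul]
      ring_nf
    have hqn : y^n * z^n = q^n := by
      rw [← mul_pow, hyeq, hzeq, hqeq, ← Real.exp_add]
      congr 2
      ring
    -- real bound for the first term
    have hexp1 : Real.exp (-((2 * M / σ^2) * ((1-2*δ) * L - σ^2/(2*M))))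
        = Real.exp 1 * z^n := by
      rw [hzn, ← Real.exp_add]
      congr 1
      have : (2 * M / σ^2) * ((1-2*δ) * L - σ^2/(2*M))
          = (2 * M / σ^2) * ((1-2*δ) * L) - (2 * M / σ^2) * (σ^2/(2*M)) := by ring
      rw [this, hlD]
      ring
    have hK1 : (K:ℝ) + 1 ≤ A * y^n + 2 := by
      have h1 : (K:ℝ) < 4 * (M^2 * ((1-ε) * X^(1/α))) / σ^2 + 1 :=
        Nat.ceil_lt_add_one (by positivity)
      have h2 : 4 * (M^2 * ((1-ε) * X^(1/α))) / σ^2 ≤ A * y^n := by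
        rw [hMBval, hAeq]
        rw [div_le_iff₀ (by positivity : (0:ℝ) < σ^2)]
        have h3 : c5 * X^β ≤ c5 * (c7 * L^β) := mul_le_mul_of_nonneg_left hXβub hc5pos.le
        have h4 : L^β = y^n := by rw [hyn, hLβ]
        calc 4 * (c5 * X^β) ≤ 4 * (c5 * (c7 * L^β)) := by linarith
          _ = 4*c5*c7/σ^2 * y^n * σ^2 := by
              rw [h4]; field_simp
      linarith
    have hterm1 : ((K:ℝ) + 1) * Real.exp (-((2 * M / σ^2) * ((1-2*δ) * L - σ^2/(2*M))))
        ≤ C1 * q^n + C2 * z^n := by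
      rw [hexp1]
      have hzn0 : 0 < Real.exp 1 * z^n := by positivity
      calc ((K:ℝ) + 1) * (Real.exp 1 * z^n)
          ≤ (A * y^n + 2) * (Real.exp 1 * z^n) :=
            mul_le_mul_of_nonneg_right hK1 hzn0.le
        _ = A * Real.exp 1 * (y^n * z^n) + 2 * Real.exp 1 * z^n := by ring
        _ = C1 * q^n + C2 * z^n := by rw [hqn, hC1eq, hC2eq]
    -- second term
    have hterm2 : Real.exp (-(M^2 * ((1-ε) * X^(1/α)) / (2*σ^2)))
        ≤ C3 * ((n:ℝ)^κ * w^n) := by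
      have hx0 : 0 < M^2 * ((1-ε) * X^(1/α)) / (2*σ^2) := by positivity
      have hgen : ∀ x : ℝ, 0 < x → Real.exp (-x) ≤ 1/x := by
        intro x hx
        rw [Real.exp_neg, one_div]
        apply inv_anti₀ hx
        have := Real.add_one_le_exp x
        linarith
      have hexple : Real.exp (-(M^2 * ((1-ε) * X^(1/α)) / (2*σ^2)))
          ≤ 1 / (M^2 * ((1-ε) * X^(1/α)) / (2*σ^2)) := hgen _ hx0
      have heq2 : 1 / (M^2 * ((1-ε) * X^(1/α)) / (2*σ^2))
          = C3 * ((n:ℝ)^β * w^n) := by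
        rw [hMBval, hXβval, hC3eq]
        have hw4 : w^n = (L^β)⁻¹ := by
          rw [hwn, hLβ, ← Real.exp_neg]
        rw [hw4]
        have hLβ0 : 0 < L^β := Real.rpow_pos_of_pos hL0 β
        have hnβ0 : 0 < (n:ℝ)^β := Real.rpow_pos_of_pos hnpos β
        field_simp
      have hnκ : (n:ℝ)^β ≤ (n:ℝ)^κ := by
        calc (n:ℝ)^β ≤ (n:ℝ)^(κ:ℝ) :=
              Real.rpow_le_rpow_of_exponent_le hnR (Nat.le_ceil β)
          _ = (n:ℝ)^κ := Real.rpow_natCast _ _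
      calc Real.exp (-(M^2 * ((1-ε) * X^(1/α)) / (2*σ^2)))
          ≤ C3 * ((n:ℝ)^β * w^n) := by rw [← heq2]; exact hexple
        _ ≤ C3 * ((n:ℝ)^κ * w^n) := by
            apply mul_le_mul_of_nonneg_left _ hC3pos.le
            exact mul_le_mul_of_nonneg_right hnκ (by positivity)
    -- assemble in ENNReal
    have hcoe : ((K:ℝ≥0∞)+1) = ENNReal.ofReal ((K:ℝ)+1) := by
      rw [ENNReal.ofReal_add (Nat.cast_nonneg K) zero_le_one,
        ENNReal.ofReal_natCast, ENNReal.ofReal_one]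
    have hfinal : ((K:ℝ≥0∞)+1) * ENNReal.ofReal
          (Real.exp (-((2 * M / σ^2) * ((1-2*δ) * L - σ^2 / (2 * M)))))
        + ENNReal.ofReal (Real.exp (-(M^2 * ((1-ε) * X^(1/α)) / (2 * σ^2))))
        ≤ ENNReal.ofReal (C1 * q^n + C2 * z^n + C3 * ((n:ℝ)^κ * w^n)) := by
      rw [hcoe, ← ENNReal.ofReal_mul (by positivity), ← ENNReal.ofReal_add
        (by positivity) (Real.exp_nonneg _)]
      apply ENNReal.ofReal_le_ofReal
      calc ((K:ℝ)+1) * Real.exp (-((2 * M / σ^2) * ((1-2*δ) * L - σ^2 / (2 * M))))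
            + Real.exp (-(M^2 * ((1-ε) * X^(1/α)) / (2 * σ^2)))
          ≤ (C1 * q^n + C2 * z^n) + C3 * ((n:ℝ)^κ * w^n) :=
            add_le_add hterm1 hterm2
        _ = C1 * q^n + C2 * z^n + C3 * ((n:ℝ)^κ * w^n) := by ring
    -- rewrite the event
    calc P {ω | (1 - 2 * δ) * Real.log (Real.exp ((1 + μ) ^ n)) <
        drawUp (Vfun σ b α (fun s => W s ω)) 0
          ((1 - ε) * sFun σ b α (Real.exp ((1 + μ) ^ n)))}
        = P {ω | (1-2*δ) * L < drawUp (Vfun σ b α (fun s => W s ω)) 0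
            ((1-ε) * X^(1/α))} := by
          rw [← hLeq]
          simp only [hlogE, hsFun]
      _ ≤ _ := le_trans hper hfinal
  -- summability of the majorant
  have hmajsum : Summable (fun n : ℕ => C1 * q^n + C2 * z^n + C3 * ((n:ℝ)^κ * w^n)) := by
    apply Summable.add
    · apply Summable.add
      · exact (summable_geometric_of_lt_one hq0.le hq1).mul_left C1
      · exact (summable_geometric_of_lt_one hz0.le hz1).mul_left C2
    · have hwnorm : ‖w‖ < 1 := by rw [Real.norm_eq_abs, abs_of_pos hw0]; exact hw1
      exact (summable_pow_mul_geometric_of_norm_lt_one κ hwnorm).mul_left C3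
  have hmajnn : ∀ n : ℕ, 0 ≤ C1 * q^n + C2 * z^n + C3 * ((n:ℝ)^κ * w^n) := by
    intro n
    positivity
  -- conclude
  rw [tsum_eq_zero_add' ENNReal.summable]
  apply ENNReal.add_lt_top.mpr
  constructor
  · exact measure_lt_top P _
  · have hle : (∑' n : ℕ, P {ω | (1 - 2 * δ) * Real.log (Real.exp ((1 + μ) ^ (n+1))) <
        drawUp (Vfun σ b α (fun s => W s ω)) 0
          ((1 - ε) * sFun σ b α (Real.exp ((1 + μ) ^ (n+1))))})
        ≤ ∑' n : ℕ, ENNReal.ofReal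
            (C1 * q^(n+1) + C2 * z^(n+1) + C3 * (((n+1:ℕ):ℝ)^κ * w^(n+1))) :=
      ENNReal.tsum_le_tsum (fun n => key (n+1) (by omega))
    apply lt_of_le_of_lt hle
    rw [← ENNReal.ofReal_tsum_of_nonneg (fun n => hmajnn (n+1))
      ((summable_nat_add_iff 1).mpr hmajsum)]
    exact ENNReal.ofReal_lt_top
end

section
/- Fix ε ∈ (0,1), δ > 0, an integer N ≥ 1, and μ > 0 small enough that β := (1−ε)(1+μ)^{1/α} < 1 − ε/2. Set η := N⁻¹(1 − ε/2 − β), t_n := exp((1+μ)ⁿ), and for each n let I_j(n) := [β s(t_n) + (j−1)η s(t_n), β s(t_n) + jη s(t_n)] for j = 1, …, N. Then Σ_{n≥0} P[ ∃ j ∈ {1,…,N} : D⁻_{I_j(n)}(V) ≤ (1+2δ) ln t_n ] < ∞. -/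
open MeasureTheory ProbabilityTheory Filter Set

section Aux

lemma aux_exp_int (x : ℝ) {a : ℝ} (ha : 0 < a) :
    ∫ y in Set.Ioi x, Real.exp (-(a * y)) = a⁻¹ * Real.exp (-(a * x)) := by
  have h := MeasureTheory.integral_comp_mul_left_Ioi (fun z => Real.exp (-z)) x ha
  simp only [smul_eq_mul] at h
  rw [h, integral_exp_neg_Ioi]

lemma aux_bern {A B p : ℝ} (hA : 0 ≤ A) (hB : 0 < B)
    (hp0 : 0 ≤ p) (hp1 : p ≤ 1) :
    p * B ^ (p - 1) * (B - A) ≤ B ^ p - A ^ p := by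
  have hs1 : (-1 : ℝ) ≤ A / B - 1 := by
    have : 0 ≤ A / B := div_nonneg hA hB.le
    linarith
  have key := rpow_one_add_le_one_add_mul_self hs1 hp0 hp1
  rw [show (1 : ℝ) + (A / B - 1) = A / B by ring, Real.div_rpow hA hB.le] at key
  have hBp : 0 < B ^ p := Real.rpow_pos_of_pos hB p
  rw [div_le_iff₀ hBp] at key
  have h4 : B ^ p = B ^ (p - 1) * B := by
    rw [← Real.rpow_add_one hB.ne' (p - 1), sub_add_cancel]
  have h5 : (1 + p * (A / B - 1)) * B ^ p = B ^ p + p * B ^ (p - 1) * (A - B) := by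
    rw [h4]; field_simp
  rw [h5] at key
  linarith

lemma aux_drawDown_ge {f : ℝ → ℝ} (hf : Continuous f) {a b : ℝ} (hab : a ≤ b) :
    f a - f b ≤ drawDown f a b := by
  haveI hne : Nonempty ↥(Set.Icc a b) := (Set.nonempty_Icc.mpr hab).to_subtype
  obtain ⟨m, hm⟩ : BddBelow (f '' Set.Icc a b) :=
    (isCompact_Icc.image hf).bddBelow
  obtain ⟨M, hM⟩ : BddAbove (f '' Set.Icc a b) :=
    (isCompact_Icc.image hf).bddAbove
  have hbddAbove : BddAbove (Set.range fun u : Set.Icc a b =>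
      f u.1 - ⨅ v : Set.Icc u.1 b, f v.1) := by
    refine ⟨M - m, ?_⟩
    rintro _ ⟨u, rfl⟩
    haveI : Nonempty ↥(Set.Icc u.1 b) := (Set.nonempty_Icc.mpr u.2.2).to_subtype
    have h1 : f u.1 ≤ M := hM ⟨u.1, u.2, rfl⟩
    have h2 : m ≤ ⨅ v : Set.Icc u.1 b, f v.1 :=
      le_ciInf fun v => hm ⟨v.1, ⟨u.2.1.trans v.2.1, v.2.2⟩, rfl⟩
    exact sub_le_sub h1 h2
  have step1 : f a - (⨅ v : Set.Icc a b, f v.1) ≤ drawDown f a b :=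
    le_ciSup hbddAbove (⟨a, Set.left_mem_Icc.mpr hab⟩ : Set.Icc a b)
  have hbddBelow : BddBelow (Set.range fun v : Set.Icc a b => f v.1) := by
    refine ⟨m, ?_⟩
    rintro _ ⟨v, rfl⟩
    exact hm ⟨v.1, v.2, rfl⟩
  have step2 : (⨅ v : Set.Icc a b, f v.1) ≤ f b :=
    ciInf_le hbddBelow (⟨b, Set.right_mem_Icc.mpr hab⟩ : Set.Icc a b)
  linarith

lemma aux_gauss_tail {v : NNReal} (hv : v ≠ 0) {x : ℝ}
    (hx : Real.sqrt (2 * (v : ℝ)) ≤ x) :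
    gaussianReal 0 v (Set.Ici x) ≤ ENNReal.ofReal (Real.exp (-(x ^ 2 / (2 * (v : ℝ))))) := by
  have hv0 : (0 : ℝ) < v := by positivity
  have hx0 : 0 < x := lt_of_lt_of_le (Real.sqrt_pos.mpr (by positivity)) hx
  set a : ℝ := x / (2 * (v : ℝ)) with ha
  have ha0 : 0 < a := by positivity
  set c : ℝ := (Real.sqrt (2 * Real.pi * (v : ℝ)))⁻¹ with hc
  have hc0 : 0 < c := by
    have : 0 < Real.sqrt (2 * Real.pi * (v : ℝ)) :=
      Real.sqrt_pos.mpr (by positivity)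
    positivity
  rw [gaussianReal_apply_eq_integral 0 hv]
  refine ENNReal.ofReal_le_ofReal ?_
  have hintmaj : MeasureTheory.IntegrableOn
      (fun y => c * Real.exp (a * x - x ^ 2 / (2 * (v : ℝ)) - a * y)) (Set.Ici x) := by
    have h1 : MeasureTheory.IntegrableOn (fun y : ℝ => Real.exp (-a * y)) (Set.Ioi x) :=
      exp_neg_integrableOn_Ioi x ha0
    have h2 : MeasureTheory.IntegrableOn
        (fun y : ℝ => (c * Real.exp (a * x - x ^ 2 / (2 * (v : ℝ)))) * Real.exp (-a * y))
        (Set.Ioi x) := h1.const_mul _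
    have h3 : MeasureTheory.IntegrableOn
        (fun y => c * Real.exp (a * x - x ^ 2 / (2 * (v : ℝ)) - a * y)) (Set.Ioi x) := by
      refine h2.congr_fun (fun y _ => ?_) measurableSet_Ioi
      beta_reduce; rw [mul_assoc, ← Real.exp_add]
      congr 2
      ring
    exact Iff.mpr integrableOn_Ici_iff_integrableOn_Ioi h3
  have hpt : ∀ y ∈ Set.Ici x, gaussianPDFReal 0 v y ≤
      c * Real.exp (a * x - x ^ 2 / (2 * (v : ℝ)) - a * y) := by
    intro y hy
    have hy' : x ≤ y := hy
    unfold gaussianPDFReal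
    rw [sub_zero]
    refine mul_le_mul_of_nonneg_left (Real.exp_le_exp.mpr ?_) hc0.le
    have hxy : -y ^ 2 ≤ -(x * y) := by nlinarith
    rw [ha, show x / (2 * (v:ℝ)) * x - x ^ 2 / (2 * (v:ℝ)) - x / (2 * (v:ℝ)) * y
        = (-(x * y)) / (2 * (v:ℝ)) by field_simp; ring]
    gcongr
  calc ∫ y in Set.Ici x, gaussianPDFReal 0 v y
      ≤ ∫ y in Set.Ici x, c * Real.exp (a * x - x ^ 2 / (2 * (v : ℝ)) - a * y) :=
        MeasureTheory.setIntegral_mono_on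
          ((integrable_gaussianPDFReal 0 v).restrict) hintmaj measurableSet_Ici hpt
    _ = (c * Real.exp (a * x - x ^ 2 / (2 * (v : ℝ)))) * ∫ y in Set.Ici x, Real.exp (-(a * y)) := by
        rw [← MeasureTheory.integral_const_mul]
        refine MeasureTheory.setIntegral_congr_fun measurableSet_Ici (fun y _ => ?_)
        rw [mul_assoc, ← Real.exp_add]
        ring_nf
    _ = (c * Real.exp (a * x - x ^ 2 / (2 * (v : ℝ)))) * (a⁻¹ * Real.exp (-(a * x))) := by
        rw [MeasureTheory.integral_Ici_eq_integral_Ioi, aux_exp_int x ha0]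
    _ = (c * a⁻¹) * Real.exp (-(x ^ 2 / (2 * (v : ℝ)))) := by
        rw [mul_comm a⁻¹ (Real.exp (-(a * x))), ← mul_assoc, mul_assoc c _ _, ← Real.exp_add,
          show a * x - x ^ 2 / (2 * (v : ℝ)) + -(a * x) = -(x ^ 2 / (2 * (v : ℝ))) by ring]
        ring
    _ ≤ 1 * Real.exp (-(x ^ 2 / (2 * (v : ℝ)))) := by
        refine mul_le_mul_of_nonneg_right ?_ (Real.exp_nonneg _)
        have hS : 0 < Real.sqrt (2 * Real.pi * (v : ℝ)) := Real.sqrt_pos.mpr (by positivity)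
        have h2v : 2 * (v : ℝ) ≤ x * Real.sqrt (2 * Real.pi * (v : ℝ)) := by
          have hs : Real.sqrt (2 * (v : ℝ)) ≤ Real.sqrt (2 * Real.pi * (v : ℝ)) :=
            Real.sqrt_le_sqrt (by nlinarith [Real.pi_gt_three, hv0])
          calc 2 * (v : ℝ) = Real.sqrt (2 * (v : ℝ)) * Real.sqrt (2 * (v : ℝ)) :=
                (Real.mul_self_sqrt (by positivity)).symm
            _ ≤ x * Real.sqrt (2 * (v : ℝ)) := by
                exact mul_le_mul_of_nonneg_right hx (Real.sqrt_nonneg _)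
            _ ≤ x * Real.sqrt (2 * Real.pi * (v : ℝ)) := by
                exact mul_le_mul_of_nonneg_left hs hx0.le
        have : c * a⁻¹ = (2 * (v : ℝ)) / (x * Real.sqrt (2 * Real.pi * (v : ℝ))) := by
          rw [hc, ha]
          field_simp
        rw [this, div_le_one (by positivity)]
        exact h2v
    _ = Real.exp (-(x ^ 2 / (2 * (v : ℝ)))) := one_mul _

end Aux


lemma aux_cont_V (σ b α : ℝ) (hα : α < 1) (w : ℝ → ℝ) (hw : Continuous w) :
    Continuous (Vfun σ b α w) := by
  refine (continuous_const.mul hw).sub (continuous_const.mul ?_)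
  refine continuous_iff_continuousAt.mpr fun x => ?_
  exact Real.continuousAt_rpow_const x (1 - α) (Or.inr (by linarith))

lemma aux_F1 {a : ℝ} (ha : 0 < a) :
    Filter.Tendsto (fun n : ℕ => Real.exp (a * n)) Filter.atTop Filter.atTop :=
  Real.tendsto_exp_atTop.comp (tendsto_natCast_atTop_atTop.const_mul_atTop ha)

lemma aux_F2 {a : ℝ} (ha : 0 < a) :
    Filter.Tendsto (fun n : ℕ => Real.exp (a * n) / n) Filter.atTop Filter.atTop := by
  have h1 : Filter.Tendsto (fun y : ℝ => a * (Real.exp y / y)) Filter.atTop Filter.atTop := by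
    have h := Real.tendsto_exp_div_pow_atTop 1
    simp only [pow_one] at h
    exact h.const_mul_atTop ha
  have h2 : Filter.Tendsto (fun n : ℕ => a * (n : ℝ)) Filter.atTop Filter.atTop :=
    tendsto_natCast_atTop_atTop.const_mul_atTop ha
  have h3 := h1.comp h2
  refine h3.congr' ?_
  filter_upwards [Filter.eventually_ge_atTop 1] with n hn
  have hn0 : (n : ℝ) ≠ 0 := by
    have : (1 : ℝ) ≤ (n : ℝ) := by exact_mod_cast hn
    linarith
  have ha' : a ≠ 0 := ha.ne'
  simp only [Function.comp]
  field_simp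

set_option maxHeartbeats 3000000 in
/-- summability of the probabilities that some of the N equal
subintervals of [βs(t_n), (1-ε/2)s(t_n)] carries a small draw-down of V,
along t_n = exp((1+μ)^n), where β = (1-ε)(1+μ)^{1/α}. -/
theorem summable_prob_small_drawDown_V
    {Ω : Type*} [MeasurableSpace Ω] (P : Measure Ω) [IsProbabilityMeasure P]
    (W : ℝ → Ω → ℝ) (hW : IsStandardBrownianMotion P W)
    (σ b α : ℝ) (hσ : 0 < σ) (hb : 0 < b) (hα : α ∈ Set.Ioo (0 : ℝ) (1 / 2))
    (ε δ μ : ℝ) (hε : ε ∈ Set.Ioo (0 : ℝ) 1) (hδ : 0 < δ) (hμ : 0 < μ)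
    (N : ℕ) (hN : 1 ≤ N)
    (hβ : (1 - ε) * (1 + μ) ^ ((1 : ℝ) / α) < 1 - ε / 2) :
    (∑' n : ℕ,
      P {ω | ∃ j : Fin N,
        drawDown (Vfun σ b α (fun s => W s ω))
          ((1 - ε) * (1 + μ) ^ ((1 : ℝ) / α) * sFun σ b α (Real.exp ((1 + μ) ^ n))
            + (j : ℝ) * ((1 - ε / 2 - (1 - ε) * (1 + μ) ^ ((1 : ℝ) / α)) / N)
              * sFun σ b α (Real.exp ((1 + μ) ^ n)))
          ((1 - ε) * (1 + μ) ^ ((1 : ℝ) / α) * sFun σ b α (Real.exp ((1 + μ) ^ n))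
            + ((j : ℝ) + 1) * ((1 - ε / 2 - (1 - ε) * (1 + μ) ^ ((1 : ℝ) / α)) / N)
              * sFun σ b α (Real.exp ((1 + μ) ^ n)))
          ≤ (1 + 2 * δ) * Real.log (Real.exp ((1 + μ) ^ n))}) < ⊤ := by
  obtain ⟨hα0, hα2⟩ := hα
  obtain ⟨hε0, hε1⟩ := hε
  have hα1 : α < 1 := by linarith
  have hμ0 : (0:ℝ) < 1 + μ := by linarith
  have hNpos : (0:ℝ) < N := by exact_mod_cast hN
  -- abbreviations
  set β : ℝ := (1 - ε) * (1 + μ) ^ ((1 : ℝ) / α) with hβ_def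
  set η : ℝ := (1 - ε / 2 - β) / N with hη_def
  set lc : ℝ := Real.log (1 + μ) with hlc_def
  set K : ℝ := b * η with hK_def
  set r : ℕ → ℝ := fun n =>
    2 * α * b / (σ ^ 2 * (1 - 2 * α)) * ((n : ℝ) * lc)⁻¹ * (1 + μ) ^ n with hr_def
  have hβ0 : 0 < β := by
    rw [hβ_def]; exact mul_pos (by linarith) (Real.rpow_pos_of_pos hμ0 _)
  have hη0 : 0 < η := by rw [hη_def]; exact div_pos (by linarith) hNpos
  have hlc : 0 < lc := by rw [hlc_def]; exact Real.log_pos (by linarith)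
  have hK : 0 < K := by rw [hK_def]; exact mul_pos hb hη0
  have hηβN : β + (N : ℝ) * η = 1 - ε / 2 := by
    rw [hη_def]; field_simp; ring
  clear_value β η lc K r
  set p : ℝ := 1 / α with hp_def
  have hp2 : 2 < p := by
    rw [hp_def, lt_div_iff₀ hα0]; linarith
  clear_value p
  have hC : 0 < 2 * α * b / (σ ^ 2 * (1 - 2 * α)) := by
    apply div_pos (by positivity)
    have h1 : 0 < σ ^ 2 := by positivity
    nlinarith
  set γ : ℝ := lc * (1 / (p - 1) + 1) / 2 with hγ_def
  have hγ0 : 0 < γ := by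
    rw [hγ_def]
    have h1 : 0 < 1 / (p - 1) := by
      apply div_pos one_pos; linarith
    apply div_pos (mul_pos hlc (by linarith)) two_pos
  have hγlt : γ < lc := by
    rw [hγ_def]
    have h1 : 1 / (p - 1) < 1 := by
      rw [div_lt_one (by linarith)]; linarith
    nlinarith
  have hγp : γ * (p - 1) = lc * p / 2 := by
    have hpne : p - 1 ≠ 0 := by linarith
    rw [hγ_def]; field_simp; ring
  have hγp1 : lc < γ * (p - 1) := by rw [hγp]; nlinarith
  clear_value γ
  have hqn : ∀ n : ℕ, ((1 + μ) : ℝ) ^ n = Real.exp (lc * n) := by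
    intro n
    rw [hlc_def, mul_comm (Real.log (1 + μ)) (n : ℝ), ← Real.log_pow,
      Real.exp_log (pow_pos hμ0 n)]
  have hsFun : ∀ n : ℕ, sFun σ b α (Real.exp ((1 + μ) ^ n)) = r n ^ p := by
    intro n
    simp only [sFun, Real.log_exp, Real.log_pow, hr_def, hlc_def, hp_def]
  -- eventual estimates
  have ev_r : ∀ᶠ n : ℕ in Filter.atTop, Real.exp (γ * n) ≤ r n := by
    have hev := (aux_F2 (show 0 < lc - γ by linarith)).eventually_ge_atTop
      (lc / (2 * α * b / (σ ^ 2 * (1 - 2 * α))))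
    filter_upwards [hev, Filter.eventually_ge_atTop 1] with n hn hn1
    have hn0 : (0:ℝ) < n := by exact_mod_cast hn1
    simp only [hr_def]
    rw [hqn n]
    rw [div_le_div_iff₀ hC hn0] at hn
    have hnl : 0 < (n : ℝ) * lc := mul_pos hn0 hlc
    have key : Real.exp (γ * n) * ((n : ℝ) * lc)
        ≤ 2 * α * b / (σ ^ 2 * (1 - 2 * α)) * Real.exp (lc * n) := by
      have h := mul_le_mul_of_nonneg_left hn (Real.exp_pos (γ * n)).le
      calc Real.exp (γ * n) * ((n : ℝ) * lc) = Real.exp (γ * n) * (lc * n) := by ring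
        _ ≤ Real.exp (γ * n) * (Real.exp ((lc - γ) * n)
            * (2 * α * b / (σ ^ 2 * (1 - 2 * α)))) := h
        _ = 2 * α * b / (σ ^ 2 * (1 - 2 * α)) * (Real.exp (γ * n)
            * Real.exp ((lc - γ) * n)) := by ring
        _ = 2 * α * b / (σ ^ 2 * (1 - 2 * α)) * Real.exp (lc * n) := by
            rw [← Real.exp_add, show γ * n + (lc - γ) * n = lc * (n:ℝ) by ring]
    rw [show 2 * α * b / (σ ^ 2 * (1 - 2 * α)) * ((n:ℝ) * lc)⁻¹ * Real.exp (lc * n)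
        = 2 * α * b / (σ ^ 2 * (1 - 2 * α)) * Real.exp (lc * n) / ((n:ℝ) * lc) by ring,
      le_div_iff₀ hnl]
    exact key
  have ev1 : ∀ᶠ n : ℕ in Filter.atTop,
      (1 + 2 * δ) * (1 + μ) ^ n ≤ K / 2 * r n ^ (p - 1) := by
    have hev := (aux_F1 (show 0 < γ * (p - 1) - lc by linarith)).eventually_ge_atTop
      (2 * (1 + 2 * δ) / K)
    filter_upwards [hev, ev_r] with n hn hrn
    have h1 : Real.exp (γ * n) ^ (p - 1) ≤ r n ^ (p - 1) :=
      Real.rpow_le_rpow (Real.exp_pos _).le hrn (by linarith)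
    have h2 : Real.exp (γ * n) ^ (p - 1) = Real.exp (γ * (p - 1) * n) := by
      rw [← Real.exp_mul]; ring_nf
    have h7 : (1 + 2 * δ) ≤ K / 2 * Real.exp ((γ * (p - 1) - lc) * n) := by
      rw [div_le_iff₀ hK] at hn; nlinarith [hn]
    calc (1 + 2 * δ) * (1 + μ) ^ n = (1 + 2 * δ) * Real.exp (lc * n) := by rw [hqn n]
      _ ≤ (K / 2 * Real.exp ((γ * (p - 1) - lc) * n)) * Real.exp (lc * n) :=
          mul_le_mul_of_nonneg_right h7 (Real.exp_pos _).le
      _ = K / 2 * Real.exp (γ * (p - 1) * n) := by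
          rw [mul_assoc, ← Real.exp_add, show (γ * (p - 1) - lc) * n + lc * n
            = γ * (p - 1) * n by ring]
      _ = K / 2 * Real.exp (γ * n) ^ (p - 1) := by rw [h2]
      _ ≤ K / 2 * r n ^ (p - 1) := mul_le_mul_of_nonneg_left h1 (by positivity)
  have ev2 : ∀ᶠ n : ℕ in Filter.atTop,
      (n : ℝ) * Real.log 2 ≤ K ^ 2 / (8 * σ ^ 2 * η) * r n ^ (p - 2) := by
    have hev := (aux_F2 (show 0 < γ * (p - 2) by nlinarith)).eventually_ge_atTop
      (8 * σ ^ 2 * η / K ^ 2 * Real.log 2)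
    filter_upwards [hev, ev_r, Filter.eventually_ge_atTop 1] with n hn hrn hn1
    have hn0 : (0:ℝ) < n := by exact_mod_cast hn1
    have h1 : Real.exp (γ * n) ^ (p - 2) ≤ r n ^ (p - 2) :=
      Real.rpow_le_rpow (Real.exp_pos _).le hrn (by linarith)
    have h2 : Real.exp (γ * n) ^ (p - 2) = Real.exp (γ * (p - 2) * n) := by
      rw [← Real.exp_mul]; ring_nf
    rw [le_div_iff₀ hn0] at hn
    have hKs : 0 < K ^ 2 / (8 * σ ^ 2 * η) := by positivity
    have h4 : K ^ 2 / (8 * σ ^ 2 * η) * (8 * σ ^ 2 * η / K ^ 2 * Real.log 2 * n)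
        = (n : ℝ) * Real.log 2 := by field_simp
    calc (n : ℝ) * Real.log 2
        = K ^ 2 / (8 * σ ^ 2 * η) * (8 * σ ^ 2 * η / K ^ 2 * Real.log 2 * n) := h4.symm
      _ ≤ K ^ 2 / (8 * σ ^ 2 * η) * Real.exp (γ * (p - 2) * n) :=
          mul_le_mul_of_nonneg_left hn hKs.le
      _ = K ^ 2 / (8 * σ ^ 2 * η) * Real.exp (γ * n) ^ (p - 2) := by rw [h2]
      _ ≤ K ^ 2 / (8 * σ ^ 2 * η) * r n ^ (p - 2) :=
          mul_le_mul_of_nonneg_left h1 hKs.le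
  have ev3 : ∀ᶠ n : ℕ in Filter.atTop,
      8 * σ ^ 2 * η ≤ K ^ 2 * r n ^ (p - 2) := by
    have hev := (aux_F1 (show 0 < γ * (p - 2) by nlinarith)).eventually_ge_atTop
      (8 * σ ^ 2 * η / K ^ 2)
    filter_upwards [hev, ev_r] with n hn hrn
    have h1 : Real.exp (γ * n) ^ (p - 2) ≤ r n ^ (p - 2) :=
      Real.rpow_le_rpow (Real.exp_pos _).le hrn (by linarith)
    have h2 : Real.exp (γ * n) ^ (p - 2) = Real.exp (γ * (p - 2) * n) := by
      rw [← Real.exp_mul]; ring_nf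
    have h3 : 8 * σ ^ 2 * η / K ^ 2 ≤ r n ^ (p - 2) := le_trans hn (h2 ▸ h1)
    rw [div_le_iff₀ (by positivity : (0:ℝ) < K ^ 2)] at h3
    linarith
    -- name the sets
  set S : ℕ → Set Ω := fun n => {ω | ∃ j : Fin N,
    drawDown (Vfun σ b α (fun s => W s ω))
      (β * sFun σ b α (Real.exp ((1 + μ) ^ n))
        + (j : ℝ) * η * sFun σ b α (Real.exp ((1 + μ) ^ n)))
      (β * sFun σ b α (Real.exp ((1 + μ) ^ n))
        + ((j : ℝ) + 1) * η * sFun σ b α (Real.exp ((1 + μ) ^ n)))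
      ≤ (1 + 2 * δ) * Real.log (Real.exp ((1 + μ) ^ n))} with hS_def
  change (∑' n : ℕ, P (S n)) < ⊤
  -- per-n bound
  have key : ∀ n : ℕ, 1 ≤ n →
      (1 + 2 * δ) * (1 + μ) ^ n ≤ K / 2 * r n ^ (p - 1) →
      (n : ℝ) * Real.log 2 ≤ K ^ 2 / (8 * σ ^ 2 * η) * r n ^ (p - 2) →
      8 * σ ^ 2 * η ≤ K ^ 2 * r n ^ (p - 2) →
      P (S n) ≤ (N : ENNReal) * ENNReal.ofReal ((2⁻¹ : ℝ) ^ n) := by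
    intro n hn1 h1 h2 h3
    have hn0 : (0:ℝ) < n := by exact_mod_cast hn1
    have hr0 : 0 < r n := by
      rw [hr_def]
      exact mul_pos (mul_pos hC (inv_pos.mpr (mul_pos hn0 hlc))) (pow_pos hμ0 n)
    have hs0 : 0 < r n ^ p := Real.rpow_pos_of_pos hr0 p
    have hrp1 : 0 < r n ^ (p - 1) := Real.rpow_pos_of_pos hr0 _
    have hrp2 : 0 < r n ^ (p - 2) := Real.rpow_pos_of_pos hr0 _
    set x : ℝ := (K * r n ^ (p - 1) - (1 + 2 * δ) * (1 + μ) ^ n) / σ with hx_def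
    have hx1 : K / 2 * r n ^ (p - 1) / σ ≤ x := by
      rw [hx_def]
      have hnum : K / 2 * r n ^ (p - 1)
          ≤ K * r n ^ (p - 1) - (1 + 2 * δ) * (1 + μ) ^ n := by linarith
      exact div_le_div_of_nonneg_right hnum hσ.le
    have hxpos : 0 < x :=
      lt_of_lt_of_le (div_pos (mul_pos (by positivity) hrp1) hσ) hx1
    have hmul : r n ^ (p - 1) * r n ^ (p - 1) = r n ^ (p - 2) * r n ^ p := by
      rw [← Real.rpow_add hr0, ← Real.rpow_add hr0]; ring_nf
    have hxsq' : K ^ 2 * (r n ^ (p - 2) * r n ^ p) / (4 * σ ^ 2) ≤ x ^ 2 := by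
      have hsq : (K / 2 * r n ^ (p - 1) / σ) ^ 2 ≤ x ^ 2 :=
        pow_le_pow_left₀ (le_of_lt (div_pos (mul_pos (by positivity) hrp1) hσ)) hx1 2
      have he : (K / 2 * r n ^ (p - 1) / σ) ^ 2
          = K ^ 2 * (r n ^ (p - 1) * r n ^ (p - 1)) / (4 * σ ^ 2) := by
        field_simp; ring
      rw [he, hmul] at hsq
      exact hsq
    have hvpos : 0 < η * r n ^ p := mul_pos hη0 hs0
    have hxsq : 2 * (η * r n ^ p) ≤ x ^ 2 := by
      refine le_trans ?_ hxsq'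
      rw [le_div_iff₀ (show (0:ℝ) < 4 * σ ^ 2 by positivity)]
      have h3' := mul_le_mul_of_nonneg_right h3 hs0.le
      linarith [h3']
    have hxlog : (n : ℝ) * Real.log 2 ≤ x ^ 2 / (2 * (η * r n ^ p)) := by
      rw [le_div_iff₀ (mul_pos two_pos hvpos)]
      refine le_trans ?_ hxsq'
      have h2' := mul_le_mul_of_nonneg_right h2 (le_of_lt (mul_pos two_pos hvpos))
      have heq : K ^ 2 / (8 * σ ^ 2 * η) * r n ^ (p - 2) * (2 * (η * r n ^ p))
          = K ^ 2 * (r n ^ (p - 2) * r n ^ p) / (4 * σ ^ 2) := by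
        field_simp; ring
      rw [heq] at h2'
      linarith
    -- bound each j-event
    have hbound : ∀ j : Fin N,
        P {ω | drawDown (Vfun σ b α (fun s => W s ω))
            (β * sFun σ b α (Real.exp ((1 + μ) ^ n))
              + (j : ℝ) * η * sFun σ b α (Real.exp ((1 + μ) ^ n)))
            (β * sFun σ b α (Real.exp ((1 + μ) ^ n))
              + ((j : ℝ) + 1) * η * sFun σ b α (Real.exp ((1 + μ) ^ n)))
            ≤ (1 + 2 * δ) * Real.log (Real.exp ((1 + μ) ^ n))}
          ≤ ENNReal.ofReal ((2⁻¹ : ℝ) ^ n) := by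
      intro j
      simp only [hsFun n, Real.log_exp]
      set A : ℝ := β * r n ^ p + (j : ℝ) * η * r n ^ p with hA_def
      set B : ℝ := β * r n ^ p + ((j : ℝ) + 1) * η * r n ^ p with hB_def
      have hj1 : (j : ℝ) + 1 ≤ (N : ℝ) := by
        have hjlt := j.isLt
        have : (j : ℕ) + 1 ≤ N := Nat.succ_le_of_lt hjlt
        exact_mod_cast this
      have hApos : 0 < A := by
        rw [hA_def]
        have hj0 : (0:ℝ) ≤ (j : ℝ) := Nat.cast_nonneg _
        linarith [mul_pos hβ0 hs0, mul_nonneg (mul_nonneg hj0 hη0.le) hs0.le]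
      have hBA : B - A = η * r n ^ p := by rw [hA_def, hB_def]; ring
      have hAB : A ≤ B := by linarith [hvpos, hBA]
      have hBpos : 0 < B := lt_of_lt_of_le hApos hAB
      have hBle : B ≤ r n ^ p := by
        rw [hB_def]
        have h6 : ((j:ℝ) + 1) * η ≤ (N:ℝ) * η := mul_le_mul_of_nonneg_right hj1 hη0.le
        have h5 : β + ((j:ℝ) + 1) * η ≤ 1 - ε / 2 := by linarith [hηβN]
        calc β * r n ^ p + ((j:ℝ) + 1) * η * r n ^ p
            = (β + ((j:ℝ) + 1) * η) * r n ^ p := by ring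
          _ ≤ (1 - ε / 2) * r n ^ p := mul_le_mul_of_nonneg_right h5 hs0.le
          _ ≤ 1 * r n ^ p := mul_le_mul_of_nonneg_right (by linarith) hs0.le
          _ = r n ^ p := one_mul _
      have hincl : {ω | drawDown (Vfun σ b α (fun s => W s ω)) A B
            ≤ (1 + 2 * δ) * (1 + μ) ^ n}
          ⊆ {ω | x ≤ W B ω - W A ω} := by
        intro ω hω
        simp only [Set.mem_setOf_eq] at hω ⊢
        have hcont := aux_cont_V σ b α hα1 (fun t => W t ω) (hW.cont ω)
        have hdd := le_trans (aux_drawDown_ge hcont hAB) hω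
        have hVexp : Vfun σ b α (fun t => W t ω) A - Vfun σ b α (fun t => W t ω) B
            = σ * W A ω - σ * W B ω - b / (1 - α) * (A ^ (1 - α) - B ^ (1 - α)) := by
          simp only [Vfun]; ring
        rw [hVexp] at hdd
        have hbern := aux_bern hApos.le hBpos
          (show (0:ℝ) ≤ 1 - α by linarith) (show (1:ℝ) - α ≤ 1 by linarith)
        have hmono : (r n ^ p) ^ (-α) ≤ B ^ (-α) :=
          Real.rpow_le_rpow_of_nonpos hBpos hBle (by linarith)
        have hsn1 : (r n ^ p) ^ (-α) * r n ^ p = r n ^ (p - 1) := by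
          rw [← Real.rpow_mul hr0.le, show p * (-α) = -1 by
            rw [hp_def]; field_simp, ← Real.rpow_add hr0,
            show (-1 : ℝ) + p = p - 1 by ring]
        have hdrift : K * r n ^ (p - 1) ≤ b / (1 - α) * (B ^ (1 - α) - A ^ (1 - α)) := by
          have e0 : (1 - α) * B ^ (1 - α - 1) * (B - A)
              = (1 - α) * (B ^ (-α) * (η * r n ^ p)) := by
            rw [show (1:ℝ) - α - 1 = -α by ring, hBA]; ring
          have e1 : (1 - α) * (B ^ (-α) * (η * r n ^ p))
              ≤ B ^ (1 - α) - A ^ (1 - α) := by rw [← e0]; exact hbern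
          have e3 : b / (1 - α) * ((1 - α) * ((r n ^ p) ^ (-α) * (η * r n ^ p)))
              = K * r n ^ (p - 1) := by
            rw [hK_def, show (r n ^ p) ^ (-α) * (η * r n ^ p)
              = η * ((r n ^ p) ^ (-α) * r n ^ p) by ring, hsn1]
            have h1α : (1:ℝ) - α ≠ 0 := by linarith
            field_simp [h1α]
          calc K * r n ^ (p - 1)
              = b / (1 - α) * ((1 - α) * ((r n ^ p) ^ (-α) * (η * r n ^ p))) := e3.symm
            _ ≤ b / (1 - α) * ((1 - α) * (B ^ (-α) * (η * r n ^ p))) := by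
                refine mul_le_mul_of_nonneg_left ?_
                  (le_of_lt (div_pos hb (by linarith)))
                refine mul_le_mul_of_nonneg_left ?_ (by linarith : (0:ℝ) ≤ 1 - α)
                exact mul_le_mul_of_nonneg_right hmono hvpos.le
            _ ≤ b / (1 - α) * (B ^ (1 - α) - A ^ (1 - α)) :=
                mul_le_mul_of_nonneg_left e1 (le_of_lt (div_pos hb (by linarith)))
        rw [hx_def, div_le_iff₀ hσ]
        linarith [hdd, hdrift]
      refine le_trans (measure_mono hincl) ?_
      have hZ : Measurable fun ω => W B ω - W A ω :=
        (hW.measurable B).sub (hW.measurable A)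
      have hmap := hW.gauss_incr A B hApos.le hAB
      have hset : {ω | x ≤ W B ω - W A ω}
          = (fun ω => W B ω - W A ω) ⁻¹' (Set.Ici x) := rfl
      rw [hset, ← Measure.map_apply hZ measurableSet_Ici, hmap]
      have hvsn : 0 < B - A := by rw [hBA]; exact hvpos
      have hcoe : ((B - A).toNNReal : ℝ) = B - A := Real.coe_toNNReal _ hvsn.le
      have hvne : (B - A).toNNReal ≠ 0 := by
        rw [← NNReal.coe_ne_zero, hcoe]; exact hvsn.ne'
      refine le_trans (aux_gauss_tail hvne ?_) ?_
      · rw [hcoe, hBA]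
        have hsq := Real.sqrt_le_sqrt hxsq
        rwa [Real.sqrt_sq hxpos.le] at hsq
      · rw [hcoe, hBA]
        refine ENNReal.ofReal_le_ofReal ?_
        have hexp : -(x ^ 2 / (2 * (η * r n ^ p))) ≤ -((n:ℝ) * Real.log 2) := by
          linarith [hxlog]
        refine le_trans (Real.exp_le_exp.mpr hexp) ?_
        rw [show -((n:ℝ) * Real.log 2) = (n:ℝ) * Real.log 2⁻¹ by
          rw [Real.log_inv]; ring, Real.exp_nat_mul,
          Real.exp_log (by norm_num : (0:ℝ) < 2⁻¹)]
    -- sum over j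
    simp only [hS_def, Set.setOf_exists]
    refine le_trans (measure_iUnion_le _) ?_
    calc (∑' j : Fin N, P {ω | drawDown (Vfun σ b α (fun s => W s ω))
            (β * sFun σ b α (Real.exp ((1 + μ) ^ n))
              + (j : ℝ) * η * sFun σ b α (Real.exp ((1 + μ) ^ n)))
            (β * sFun σ b α (Real.exp ((1 + μ) ^ n))
              + ((j : ℝ) + 1) * η * sFun σ b α (Real.exp ((1 + μ) ^ n)))
            ≤ (1 + 2 * δ) * Real.log (Real.exp ((1 + μ) ^ n))})
        ≤ ∑' _j : Fin N, ENNReal.ofReal ((2⁻¹ : ℝ) ^ n) :=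
          ENNReal.tsum_le_tsum hbound
      _ = (N : ENNReal) * ENNReal.ofReal ((2⁻¹ : ℝ) ^ n) := by
          rw [tsum_fintype]
          simp [Finset.sum_const, Finset.card_univ, nsmul_eq_mul]
  -- assemble
  obtain ⟨n₀, hn₀⟩ := Filter.eventually_atTop.mp
    (((ev1.and ev2).and ev3).and (Filter.eventually_ge_atTop 1))
  have hPbound : ∀ n : ℕ, n₀ ≤ n →
      P (S n) ≤ (N : ENNReal) * (ENNReal.ofReal 2⁻¹) ^ n := by
    intro n hn
    obtain ⟨⟨⟨h1, h2⟩, h3⟩, h4⟩ := hn₀ n hn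
    refine le_trans (key n h4 h1 h2 h3) ?_
    rw [ENNReal.ofReal_pow (by norm_num : (0:ℝ) ≤ 2⁻¹)]
  rw [← Summable.sum_add_tsum_nat_add' (f := fun n => P (S n)) (k := n₀) ENNReal.summable]
  refine ENNReal.add_lt_top.mpr ⟨?_, ?_⟩
  · exact ENNReal.sum_lt_top.mpr fun i _ => measure_lt_top P _
  · have hRle1 : ENNReal.ofReal 2⁻¹ ≤ 1 := by
      rw [ENNReal.ofReal_le_one]; norm_num
    calc (∑' i : ℕ, P (S (i + n₀)))
        ≤ ∑' i : ℕ, (N : ENNReal) * (ENNReal.ofReal 2⁻¹) ^ (i + n₀) :=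
          ENNReal.tsum_le_tsum fun i => hPbound (i + n₀) (Nat.le_add_left _ _)
      _ ≤ ∑' i : ℕ, (N : ENNReal) * (ENNReal.ofReal 2⁻¹) ^ i := by
          refine ENNReal.tsum_le_tsum fun i => ?_
          refine mul_le_mul_right ?_ _
          rw [pow_add]
          exact le_trans (mul_le_mul_right (pow_le_one' hRle1 n₀) _)
            (le_of_eq (mul_one _))
      _ = (N : ENNReal) * ∑' i : ℕ, (ENNReal.ofReal 2⁻¹) ^ i := ENNReal.tsum_mul_left
      _ = (N : ENNReal) * (1 - ENNReal.ofReal 2⁻¹)⁻¹ := by rw [ENNReal.tsum_geometric]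
      _ < ⊤ := by
          refine ENNReal.mul_lt_top (ENNReal.natCast_lt_top N) ?_
          rw [ENNReal.inv_lt_top, tsub_pos_iff_lt]
          exact ENNReal.ofReal_lt_one.mpr (by norm_num)
end

section
/- Fix ε ∈ (0,1), δ > 0 with 2δ < (1+ε/2)^α − 1, an integer N ≥ 1, and μ > 0 small enough that 1 + β := (1+ε/2)(1+μ)^{1/α} < 1 + ε. Set t_n := exp((1+μ)ⁿ), and for each n let J_j(n) := [(1+β)s(t_n) + (j−1)((ε−β)/N) s(t_n), (1+β)s(t_n) + j((ε−β)/N) s(t_n)] for j = 1, …, N. Then Σ_{n≥0} P[ ∃ j ∈ {1,…,N} : D⁺_{J_j(n)}(V) ≤ (1+2δ) ln t_n ] < ∞. -/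
open MeasureTheory ProbabilityTheory Filter Set

-- ==================== auxiliary lemmas (proved already) ====================

lemma drawUp_ge (f : ℝ → ℝ) {a b x y : ℝ} (hf : ContinuousOn f (Set.Icc a b))
    (hax : a ≤ x) (hxy : x ≤ y) (hyb : y ≤ b) : f y - f x ≤ drawUp f a b := by
  have hab : a ≤ b := le_trans (le_trans hax hxy) hyb
  have hcpt : IsCompact (f '' Set.Icc a b) := (isCompact_Icc).image_of_continuousOn hf
  obtain ⟨M, hM⟩ : ∃ M, ∀ z ∈ Set.Icc a b, f z ≤ M := by
    obtain ⟨M, hM⟩ := hcpt.bddAbove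
    exact ⟨M, fun z hz => hM (Set.mem_image_of_mem f hz)⟩
  obtain ⟨m, hm⟩ : ∃ m, ∀ z ∈ Set.Icc a b, m ≤ f z := by
    obtain ⟨m, hm⟩ := hcpt.bddBelow
    exact ⟨m, fun z hz => hm (Set.mem_image_of_mem f hz)⟩
  have hy' : y ∈ Set.Icc a b := ⟨le_trans hax hxy, hyb⟩
  have hsub : ∀ u : Set.Icc a b, Set.Icc a u.1 ⊆ Set.Icc a b :=
    fun u => Set.Icc_subset_Icc le_rfl u.2.2
  have hbb : ∀ u : Set.Icc a b, BddBelow (Set.range fun v : Set.Icc a u.1 => f v.1) := by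
    intro u
    exact ⟨m, by rintro z ⟨v, rfl⟩; exact hm _ (hsub u v.2)⟩
  have hne : ∀ u : Set.Icc a b, Nonempty (Set.Icc a u.1) :=
    fun u => ⟨⟨a, le_rfl, u.2.1⟩⟩
  have hstep1 : f y - f x ≤ f y - ⨅ v : Set.Icc a y, f v.1 := by
    have : (⨅ v : Set.Icc a y, f v.1) ≤ f x := by
      have hmem : x ∈ Set.Icc a y := ⟨hax, hxy⟩
      exact ciInf_le (hbb ⟨y, hy'⟩) (⟨x, hmem⟩ : Set.Icc a y)
    linarith
  refine le_trans hstep1 ?_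
  have hBdd : BddAbove (Set.range fun u : Set.Icc a b => f u.1 - ⨅ v : Set.Icc a u.1, f v.1) := by
    refine ⟨M - m, ?_⟩
    rintro z ⟨u, rfl⟩
    have h1 : f u.1 ≤ M := hM _ u.2
    have h2 : m ≤ ⨅ v : Set.Icc a u.1, f v.1 := by
      have := hne u
      exact le_ciInf fun v => hm _ (hsub u v.2)
    simp only
    linarith
  exact le_ciSup hBdd (⟨y, hy'⟩ : Set.Icc a b)

lemma drift_bound {a x y : ℝ} (ha : 0 < a) (ha1 : a < 1) (hx : 0 < x) (hxy : x ≤ y) :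
    y ^ (1 - a) - x ^ (1 - a) ≤ (1 - a) * x ^ (-a) * (y - x) := by
  set p : ℝ := 1 - a with hp
  have hp0 : 0 ≤ p := by simp [hp]; linarith
  have hp1 : p ≤ 1 := by simp [hp]; linarith
  set s : ℝ := (y - x) / x with hs
  have hs0 : 0 ≤ s := div_nonneg (by linarith) hx.le
  have hxs : x * (1 + s) = y := by
    rw [hs, mul_add, mul_one, mul_div_assoc', mul_div_right_comm, div_self hx.ne', one_mul]; ring
  have hbern : (1 + s) ^ p ≤ 1 + p * s :=
    rpow_one_add_le_one_add_mul_self (by linarith) hp0 hp1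
  have hy : y ^ p = x ^ p * (1 + s) ^ p := by
    rw [← hxs, Real.mul_rpow hx.le (by linarith)]
  have hxps : x ^ p * s = x ^ (-a) * (y - x) := by
    have : x ^ (-a) = x ^ p / x := by
      rw [hp]; rw [show (-a : ℝ) = (1 - a) - 1 by ring, Real.rpow_sub hx, Real.rpow_one]
    rw [this, hs]
    field_simp
  have h1 : y ^ p ≤ x ^ p * (1 + p * s) := by
    rw [hy]
    exact mul_le_mul_of_nonneg_left hbern (Real.rpow_nonneg hx.le p)
  have h2 : x ^ p * (1 + p * s) = x ^ p + p * (x ^ p * s) := by ring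
  rw [h2, hxps] at h1
  linarith

open Real in
lemma gauss_Iic_le {v : NNReal} (hv : v ≠ 0) {c : ℝ} (hc : 0 ≤ c) :
    gaussianReal 0 v (Set.Iic c)
      ≤ ENNReal.ofReal (1 - (Real.sqrt (2 * π))⁻¹
          * Real.exp (-(c + Real.sqrt v) ^ 2 / (2 * v))) := by
  have hv0 : (0 : ℝ) < v := by positivity
  set q : ℝ := (Real.sqrt (2 * π))⁻¹ * Real.exp (-(c + Real.sqrt v) ^ 2 / (2 * v)) with hq
  have hq0 : 0 ≤ q := by positivity
  have hsq : (0:ℝ) < Real.sqrt v := Real.sqrt_pos.2 hv0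
  have htail : ENNReal.ofReal q ≤ gaussianReal 0 v (Set.Ioi c) := by
    have hsub : Set.Ioc c (c + Real.sqrt v) ⊆ Set.Ioi c := Set.Ioc_subset_Ioi_self
    refine le_trans ?_ (measure_mono hsub)
    rw [gaussianReal_apply _ hv]
    have hpdf : ∀ x ∈ Set.Ioc c (c + Real.sqrt v),
        ENNReal.ofReal (gaussianPDFReal 0 v (c + Real.sqrt v)) ≤ gaussianPDF 0 v x := by
      intro x hx
      unfold gaussianPDF
      apply ENNReal.ofReal_le_ofReal
      unfold gaussianPDFReal
      apply mul_le_mul_of_nonneg_left _ (by positivity)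
      apply Real.exp_le_exp.2
      have hx0 : 0 ≤ x := le_trans hc hx.1.le
      have h1 : (x - 0) ^ 2 ≤ (c + Real.sqrt v - 0) ^ 2 := by
        simp only [sub_zero]
        exact pow_le_pow_left₀ hx0 hx.2 2
      have h2v : (0:ℝ) < 2 * v := by linarith
      gcongr
    calc ENNReal.ofReal q
        = ENNReal.ofReal (gaussianPDFReal 0 v (c + Real.sqrt v)) * volume (Set.Ioc c (c + Real.sqrt v)) := by
          rw [Real.volume_Ioc]
          rw [← ENNReal.ofReal_mul (gaussianPDFReal_nonneg _ _ _)]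
          congr 1
          unfold gaussianPDFReal
          rw [show (2 * π * (v:ℝ)) = (2 * π) * (v:ℝ) by ring, Real.sqrt_mul (by positivity)]
          have h3 : c + Real.sqrt v - c = Real.sqrt v := by ring
          rw [h3, hq]
          have h4 : ((c + Real.sqrt v - 0) ^ 2) = ((c + Real.sqrt v) ^ 2) := by ring
          rw [h4]
          field_simp
      _ = ∫⁻ _ in Set.Ioc c (c + Real.sqrt v), ENNReal.ofReal (gaussianPDFReal 0 v (c + Real.sqrt v)) := by
          rw [setLIntegral_const]
      _ ≤ ∫⁻ x in Set.Ioc c (c + Real.sqrt v), gaussianPDF 0 v x :=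
          setLIntegral_mono' measurableSet_Ioc hpdf
  rw [← Set.compl_Ioi, prob_compl_eq_one_sub measurableSet_Ioi]
  calc (1 : ENNReal) - gaussianReal 0 v (Set.Ioi c)
      ≤ 1 - ENNReal.ofReal q := tsub_le_tsub_left htail 1
    _ = ENNReal.ofReal (1 - q) := by
        rw [← ENNReal.ofReal_one, ← ENNReal.ofReal_sub _ hq0]

lemma tsum_lt_top_of_eventually (f : ℕ → ENNReal) (hf : ∀ n, f n ≤ 1)
    (h : ∀ᶠ n in atTop, f n ≤ ENNReal.ofReal ((1/2 : ℝ) ^ n)) : (∑' n, f n) < ⊤ := by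
  obtain ⟨M, hM⟩ := eventually_atTop.1 h
  have hhalf : ∀ n : ℕ, ENNReal.ofReal ((1/2 : ℝ) ^ n) = (2 : ENNReal)⁻¹ ^ n := by
    intro n
    rw [ENNReal.ofReal_pow (by norm_num)]
    congr 1
    rw [show (1/2:ℝ) = (2:ℝ)⁻¹ by norm_num, ENNReal.ofReal_inv_of_pos (by norm_num)]
    norm_num
  have hcancel : (2:ENNReal) * 2⁻¹ = 1 := ENNReal.mul_inv_cancel two_ne_zero (by norm_num)
  have hg : ∀ n, f n ≤ (2 : ENNReal) ^ M * (2)⁻¹ ^ n := by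
    intro n
    rcases le_or_gt M n with hn | hn
    · calc f n ≤ (2 : ENNReal)⁻¹ ^ n := by rw [← hhalf]; exact hM n hn
        _ = 1 * 2⁻¹ ^ n := (one_mul _).symm
        _ ≤ 2 ^ M * 2⁻¹ ^ n := by
          gcongr
          exact_mod_cast Nat.one_le_two_pow
    · calc f n ≤ 1 := hf n
        _ = (2 * 2⁻¹ : ENNReal) ^ n := by rw [hcancel, one_pow]
        _ = 2 ^ n * 2⁻¹ ^ n := mul_pow _ _ _
        _ ≤ 2 ^ M * 2⁻¹ ^ n :=
          mul_le_mul_left (pow_le_pow_right₀ one_le_two hn.le) _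
  calc (∑' n, f n) ≤ ∑' n, (2 : ENNReal) ^ M * 2⁻¹ ^ n := ENNReal.tsum_le_tsum hg
    _ = 2 ^ M * ∑' n, (2 : ENNReal)⁻¹ ^ n := ENNReal.tsum_mul_left
    _ < ⊤ := by
        rw [ENNReal.tsum_geometric, ENNReal.one_sub_inv_two, inv_inv]
        exact ENNReal.mul_lt_top
          (ENNReal.pow_ne_top ENNReal.ofNat_ne_top).lt_top (by norm_num)

open Real in
lemma eventually_linear_le_exp (A D g K B C : ℝ) (hA : 0 < A) (hK : 0 < K) :
    ∀ᶠ n : ℕ in atTop,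
      B + C * n ≤ K * Real.exp (A * n - D * Real.sqrt n - g * Real.log n) := by
  set E : ℝ := |D| + 2 * |g| with hE
  have hE0 : 0 ≤ E := by positivity
  set M₁ : ℕ := ⌈(2 * E / A) ^ 2⌉₊ with hM₁
  set M₂ : ℕ := ⌈16 * (|B| + |C| + 1) / (K * A ^ 2)⌉₊ with hM₂
  rw [eventually_atTop]
  refine ⟨max 1 (max M₁ M₂), fun n hn => ?_⟩
  have hn1 : 1 ≤ n := le_trans (le_max_left _ _) hn
  have hnM₁ : M₁ ≤ n := le_trans (le_trans (le_max_left _ _) (le_max_right _ _)) hn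
  have hnM₂ : M₂ ≤ n := le_trans (le_trans (le_max_right _ _) (le_max_right _ _)) hn
  have hn1' : (1:ℝ) ≤ n := by exact_mod_cast hn1
  have hn0 : (0:ℝ) ≤ n := by linarith
  have hsq0 : (0:ℝ) ≤ Real.sqrt n := Real.sqrt_nonneg _
  have hsq1 : (1:ℝ) ≤ Real.sqrt n := by
    rw [show (1:ℝ) = Real.sqrt 1 by simp]
    exact Real.sqrt_le_sqrt hn1'
  -- log n ≤ 2 √n
  have hlog : Real.log n ≤ 2 * Real.sqrt n := by
    have h1 : Real.log (Real.sqrt n) ≤ Real.sqrt n - 1 :=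
      Real.log_le_sub_one_of_pos (by linarith)
    have h2 : Real.log (Real.sqrt n) = Real.log n / 2 := Real.log_sqrt hn0
    linarith
  have hlog0 : 0 ≤ Real.log n := Real.log_nonneg hn1'
  -- D √n + g log n ≤ E √n
  have hDg : D * Real.sqrt n + g * Real.log n ≤ E * Real.sqrt n := by
    have h1 : D * Real.sqrt n ≤ |D| * Real.sqrt n :=
      mul_le_mul_of_nonneg_right (le_abs_self D) hsq0
    have h2 : g * Real.log n ≤ |g| * (2 * Real.sqrt n) := by
      calc g * Real.log n ≤ |g| * Real.log n :=
            mul_le_mul_of_nonneg_right (le_abs_self g) hlog0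
        _ ≤ |g| * (2 * Real.sqrt n) := mul_le_mul_of_nonneg_left hlog (abs_nonneg g)
    rw [hE]; ring_nf; nlinarith
  -- E √n ≤ (A/2) n
  have hEn : E * Real.sqrt n ≤ A / 2 * n := by
    have hsqM : 2 * E / A ≤ Real.sqrt n := by
      have h1 : ((2 * E / A) ^ 2 : ℝ) ≤ n := le_trans (Nat.le_ceil _) (by exact_mod_cast hnM₁)
      have h2 : Real.sqrt ((2 * E / A) ^ 2) ≤ Real.sqrt n := Real.sqrt_le_sqrt h1
      rwa [Real.sqrt_sq (by positivity)] at h2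
    have hsq : Real.sqrt n * Real.sqrt n = n := Real.mul_self_sqrt hn0
    have h3 : 2 * E ≤ A * Real.sqrt n := by
      rw [div_le_iff₀ hA] at hsqM; linarith
    nlinarith [mul_le_mul_of_nonneg_right h3 hsq0]
  -- exponent ≥ (A/2) n
  have hexp1 : A / 2 * n ≤ A * n - D * Real.sqrt n - g * Real.log n := by nlinarith
  -- exp ((A/2) n) ≥ (A n / 4)^2
  have hexp2 : (A / 4 * n) ^ 2 ≤ Real.exp (A / 2 * n) := by
    have h1 : A / 4 * n + 1 ≤ Real.exp (A / 4 * n) := Real.add_one_le_exp _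
    have h2 : Real.exp (A / 2 * n) = Real.exp (A / 4 * n) ^ 2 := by
      rw [← Real.exp_nat_mul]; norm_num; ring_nf
    have h3 : (0:ℝ) ≤ A / 4 * n := by positivity
    nlinarith
  -- K (A n/4)^2 ≥ B + C n
  have hpoly : B + C * n ≤ K * (A / 4 * n) ^ 2 := by
    have h1 : (16 * (|B| + |C| + 1) / (K * A ^ 2) : ℝ) ≤ n :=
      le_trans (Nat.le_ceil _) (by exact_mod_cast hnM₂)
    have h2 : 16 * (|B| + |C| + 1) ≤ K * A ^ 2 * n := by
      rw [div_le_iff₀ (by positivity)] at h1; linarith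
    have hB : B ≤ |B| := le_abs_self B
    have hC : C ≤ |C| := le_abs_self C
    nlinarith [abs_nonneg B, abs_nonneg C, mul_le_mul_of_nonneg_left h2 hn0]
  calc B + C * n ≤ K * (A / 4 * n) ^ 2 := hpoly
    _ ≤ K * Real.exp (A / 2 * n) := mul_le_mul_of_nonneg_left hexp2 hK.le
    _ ≤ K * Real.exp (A * n - D * Real.sqrt n - g * Real.log n) :=
        mul_le_mul_of_nonneg_left (Real.exp_le_exp.2 hexp1) hK.le


set_option maxHeartbeats 1000000 in
/-- summability of the probabilities that some of the N equal
subintervals of [(1+β)s(t_n), (1+ε)s(t_n)] carries a small draw-up of V,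
along t_n = exp((1+μ)^n), where 1+β = (1+ε/2)(1+μ)^{1/α}. -/
theorem summable_prob_small_drawUp_V
    {Ω : Type*} [MeasurableSpace Ω] (P : Measure Ω) [IsProbabilityMeasure P]
    (W : ℝ → Ω → ℝ) (hW : IsStandardBrownianMotion P W)
    (σ b α : ℝ) (hσ : 0 < σ) (hb : 0 < b) (hα : α ∈ Set.Ioo (0 : ℝ) (1 / 2))
    (ε δ μ : ℝ) (hε : ε ∈ Set.Ioo (0 : ℝ) 1) (hδ : 0 < δ) (hμ : 0 < μ)
    (hδ' : 2 * δ < (1 + ε / 2) ^ α - 1)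
    (N : ℕ) (hN : 1 ≤ N)
    (hβ : (1 + ε / 2) * (1 + μ) ^ ((1 : ℝ) / α) < 1 + ε) :
    (∑' n : ℕ,
      P {ω | ∃ j : Fin N,
        drawUp (Vfun σ b α (fun s => W s ω))
          ((1 + ε / 2) * (1 + μ) ^ ((1 : ℝ) / α) * sFun σ b α (Real.exp ((1 + μ) ^ n))
            + (j : ℝ) * ((ε - ((1 + ε / 2) * (1 + μ) ^ ((1 : ℝ) / α) - 1)) / N)
              * sFun σ b α (Real.exp ((1 + μ) ^ n)))
          ((1 + ε / 2) * (1 + μ) ^ ((1 : ℝ) / α) * sFun σ b α (Real.exp ((1 + μ) ^ n))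
            + ((j : ℝ) + 1) * ((ε - ((1 + ε / 2) * (1 + μ) ^ ((1 : ℝ) / α) - 1)) / N)
              * sFun σ b α (Real.exp ((1 + μ) ^ n)))
          ≤ (1 + 2 * δ) * Real.log (Real.exp ((1 + μ) ^ n))}) < ⊤ := by
  obtain ⟨hα0, hα2⟩ := hα
  obtain ⟨hε0, hε1⟩ := hε
  have hα2' : α < 1/2 := hα2
  have hα1 : α < 1 := by linarith
  have h2α : (0:ℝ) < 1 - 2*α := by linarith
  have hσ2 : (0:ℝ) < σ^2 := by positivity
  -- global constants
  set lam : ℝ := Real.log (1 + μ) with hlam_def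
  have hlam : 0 < lam := Real.log_pos (by linarith)
  have hμ1 : (1:ℝ) < 1 + μ := by linarith
  have hrpow1 : (1:ℝ) < (1+μ) ^ ((1:ℝ)/α) :=
    (Real.one_lt_rpow_iff_of_pos (by linarith)).2 (Or.inl ⟨hμ1, by positivity⟩)
  set Bc : ℝ := (1 + ε / 2) * (1 + μ) ^ ((1:ℝ)/α) with hBc_def
  have hBc1 : 1 < Bc := by nlinarith
  have hBc0 : 0 < Bc := lt_trans one_pos hBc1
  set w' : ℝ := (ε - (Bc - 1)) / N with hw'_def
  have hNpos : (0:ℝ) < N := by exact_mod_cast Nat.lt_of_lt_of_le Nat.zero_lt_one hN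
  have hw' : 0 < w' := div_pos (by linarith [hβ]) hNpos
  set Cs : ℝ := 2 * α * b / (σ^2 * (1 - 2*α)) with hCs_def
  have hCs : 0 < Cs := div_pos (by positivity) (mul_pos hσ2 h2α)
  set γ₁ : ℝ := 1/α - 1 with hγ₁_def
  have hγ₁ : 0 < γ₁ := by
    rw [hγ₁_def]
    have : 1 < 1/α := by rw [lt_div_iff₀ hα0]; linarith
    linarith
  have hBcα : Bc ^ α = (1 + ε/2)^α * (1+μ) := by
    rw [hBc_def, Real.mul_rpow (by linarith) (by positivity),
      ← Real.rpow_mul (by linarith : (0:ℝ) ≤ 1+μ), one_div, inv_mul_cancel₀ hα0.ne',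
      Real.rpow_one]
  have hBcα0 : 0 < Bc ^ α := Real.rpow_pos_of_pos hBc0 α
  have hδBc : 1 + 2*δ < Bc ^ α := by
    rw [hBcα]
    have h1 : (1:ℝ) < (1+ε/2)^α :=
      (Real.one_lt_rpow_iff_of_pos (by linarith)).2 (Or.inl ⟨by linarith, hα0⟩)
    nlinarith [Real.rpow_pos_of_pos (show (0:ℝ) < 1+ε/2 by linarith) α]
  have h12δ : (0:ℝ) < 1 + 2*δ := by linarith
  set A₂ : ℝ := 2 * (1+2*δ) * b * lam / (σ^2 * Bc^α * Cs) with hA₂_def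
  have hA₂0 : 0 < A₂ := div_pos (by positivity) (by positivity)
  set A' : ℝ := γ₁ * lam - lam - A₂ with hA'_def
  have hA' : 0 < A' := by
    have hne2 : Bc^α ≠ 0 := hBcα0.ne'
    have key : A' = lam * (1-2*α)/α * (1 - (1+2*δ)/Bc^α) := by
      rw [hA'_def, hA₂_def, hγ₁_def, hCs_def]
      field_simp
      ring
    rw [key]
    have hlt : (1+2*δ)/Bc^α < 1 := (div_lt_one hBcα0).2 hδBc
    apply mul_pos (by positivity) (by linarith)
  set D : ℝ := Real.sqrt (2 * A₂) with hD_def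
  set K : ℝ := (w' * b / ((1+2*δ) * Bc^α) * (Real.sqrt (2*Real.pi))⁻¹)
      * Real.exp (γ₁ * (Real.log Cs - Real.log lam) - 1/2) with hK_def
  have hK : 0 < K := by
    apply mul_pos _ (Real.exp_pos _)
    apply mul_pos (div_pos (mul_pos hw' hb) (mul_pos h12δ hBcα0))
    rw [inv_pos]
    exact Real.sqrt_pos.2 (by positivity)
  -- reduce to an eventual bound
  apply tsum_lt_top_of_eventually _ (fun n => prob_le_one)
  have hEV := eventually_linear_le_exp A' D γ₁ K (Real.log N + 1) (Real.log 2) hA' hK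
  filter_upwards [hEV, eventually_ge_atTop 1] with n hEVn hn1
  -- per-n quantities
  set T : ℝ := (1+μ)^n with hT_def
  have hT1 : 1 < T := one_lt_pow₀ hμ1 (by omega)
  have hT0 : (0:ℝ) < T := lt_trans one_pos hT1
  have hlogT : Real.log T = n * lam := by rw [hT_def, Real.log_pow]
  have hnR : (1:ℝ) ≤ (n:ℝ) := by exact_mod_cast hn1
  have hn0 : (0:ℝ) < (n:ℝ) := by linarith
  set X : ℝ := Cs * ((n:ℝ) * lam)⁻¹ * T with hX_def
  have hX0 : 0 < X := by
    apply mul_pos (mul_pos hCs _) hT0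
    rw [inv_pos]; positivity
  set sn : ℝ := sFun σ b α (Real.exp T) with hsn_def
  have hsX : sn = X ^ ((1:ℝ)/α) := by
    rw [hsn_def]
    unfold sFun
    rw [Real.log_exp, hlogT, hX_def, hCs_def]
  have hs0 : 0 < sn := by rw [hsX]; exact Real.rpow_pos_of_pos hX0 _
  have hsα : sn ^ α = X := by
    rw [hsX, ← Real.rpow_mul hX0.le, one_div, inv_mul_cancel₀ hα0.ne', Real.rpow_one]
  -- more per-n quantities
  set L : ℝ := ((1+2*δ) * Bc^α / b) * T * X with hL_def
  have hL0 : 0 < L := mul_pos (mul_pos (div_pos (mul_pos h12δ hBcα0) hb) hT0) hX0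
  set cth : ℝ := 2 * ((1+2*δ) * T) / σ with hcth_def
  have hcth0 : 0 ≤ cth := le_of_lt (div_pos (mul_pos two_pos (mul_pos h12δ hT0)) hσ)
  set q : ℝ := (Real.sqrt (2*Real.pi))⁻¹
      * Real.exp (-(cth + Real.sqrt L)^2 / (2*L)) with hq_def
  have hq0 : 0 < q := by positivity
  have hq1 : q ≤ 1 := by
    have h1 : Real.exp (-(cth + Real.sqrt L)^2 / (2*L)) ≤ 1 := by
      rw [Real.exp_le_one_iff]
      apply div_nonpos_of_nonpos_of_nonneg (neg_nonpos.2 (sq_nonneg _)) (by linarith only [hL0])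
    have h2 : (Real.sqrt (2*Real.pi))⁻¹ ≤ 1 := by
      rw [inv_le_one_iff₀]
      right
      rw [show (1:ℝ) = Real.sqrt 1 by simp]
      apply Real.sqrt_le_sqrt
      linarith only [Real.pi_gt_three]
    rw [hq_def]
    calc (Real.sqrt (2*Real.pi))⁻¹ * Real.exp (-(cth + Real.sqrt L)^2 / (2*L))
        ≤ 1 * 1 := mul_le_mul h2 h1 (Real.exp_pos _).le one_pos.le
      _ = 1 := one_mul 1
  set R : ℝ := w' * sn / L with hR_def
  have hR0 : 0 < R := div_pos (mul_pos hw' hs0) hL0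
  set k : ℕ := ⌊R⌋₊ with hk_def
  -- the time grid
  set tgrid : Fin N → Fin (k+1) → ℝ :=
    fun j i => Bc * sn + (j:ℝ) * w' * sn + (i:ℝ) * L with htg_def
  clear_value tgrid k R q cth L sn X T K D A' A₂ γ₁ Cs w' Bc lam
  have htg0 : ∀ j i, 0 ≤ tgrid j i := by
    intro j i
    simp only [htg_def]
    have h1 : (0:ℝ) ≤ (j:ℝ) * w' * sn :=
      mul_nonneg (mul_nonneg (by positivity) hw'.le) hs0.le
    have h2 : (0:ℝ) ≤ (i:ℝ) * L := mul_nonneg (by positivity) hL0.le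
    linarith only [mul_pos hBc0 hs0, h1, h2]
  have htg_mono : ∀ j, Monotone (tgrid j) := by
    intro j i i' hii
    simp only [htg_def]
    have h1 : ((i:ℕ):ℝ) ≤ ((i':ℕ):ℝ) := by exact_mod_cast hii
    have h2 := mul_le_mul_of_nonneg_right h1 hL0.le
    linarith only [h2]
  have htg_diff : ∀ j (i : Fin k), tgrid j i.succ - tgrid j i.castSucc = L := by
    intro j i
    simp only [htg_def, Fin.val_succ, Fin.coe_castSucc]
    push_cast
    ring
  have hBs_le : ∀ j (i : Fin (k+1)), Bc * sn ≤ tgrid j i := by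
    intro j i
    simp only [htg_def]
    have h1 : (0:ℝ) ≤ (j:ℝ) * w' * sn :=
      mul_nonneg (mul_nonneg (by positivity) hw'.le) hs0.le
    have h2 : (0:ℝ) ≤ (i:ℝ) * L := mul_nonneg (by positivity) hL0.le
    linarith only [h1, h2]
  have htg_pos : ∀ j (i : Fin (k+1)), 0 < tgrid j i :=
    fun j i => lt_of_lt_of_le (mul_pos hBc0 hs0) (hBs_le j i)
  have hkL : (k:ℝ) * L ≤ w' * sn := by
    have h1 : (k:ℝ) ≤ R := by rw [hk_def]; exact Nat.floor_le hR0.le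
    have h2 := mul_le_mul_of_nonneg_right h1 hL0.le
    rw [hR_def, div_mul_cancel₀ _ hL0.ne'] at h2
    exact h2
  -- step 1: inclusion into increment events, and product bound
  refine le_trans (measure_mono (?_ : _ ⊆ ⋃ j : Fin N, ⋂ i : Fin k,
      (fun ω => W (tgrid j i.succ) ω - W (tgrid j i.castSucc) ω) ⁻¹' (Set.Iic cth))) ?_
  · rintro ω ⟨j, hj⟩
    refine Set.mem_iUnion.2 ⟨j, Set.mem_iInter.2 fun i => ?_⟩
    simp only [Set.mem_preimage, Set.mem_Iic]
    rw [Real.log_exp,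
      show Bc * sn + ((j:ℝ)+1) * w' * sn = Bc * sn + (j:ℝ) * w' * sn + w' * sn by ring] at hj
    -- endpoints
    have hax : Bc * sn + (j:ℝ) * w' * sn ≤ tgrid j i.castSucc := by
      simp only [htg_def]
      have h2 : (0:ℝ) ≤ (i.castSucc:ℝ) * L := mul_nonneg (by positivity) hL0.le
      linarith
    have hxy : tgrid j i.castSucc ≤ tgrid j i.succ := htg_mono j (Fin.castSucc_le_succ i)
    have hyb : tgrid j i.succ ≤ Bc * sn + (j:ℝ) * w' * sn + w' * sn := by
      simp only [htg_def, Fin.val_succ]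
      have h1 : ((i:ℕ):ℝ) + 1 ≤ (k:ℝ) := by exact_mod_cast i.isLt
      have h2 : (((i:ℕ):ℝ) + 1) * L ≤ (k:ℝ) * L := mul_le_mul_of_nonneg_right h1 hL0.le
      push_cast
      linarith only [h2, hkL]
    have haj0 : 0 < Bc * sn + (j:ℝ) * w' * sn := by
      have h1 : (0:ℝ) ≤ (j:ℝ) * w' * sn :=
        mul_nonneg (mul_nonneg (by positivity) hw'.le) hs0.le
      linarith only [mul_pos hBc0 hs0, h1]
    -- continuity
    have hVeq : Vfun σ b α (fun u => W u ω)
        = fun x => σ * W x ω - b / (1-α) * x ^ (1-α) := rfl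
    have hcont : ContinuousOn (Vfun σ b α (fun u => W u ω))
        (Set.Icc (Bc * sn + (j:ℝ) * w' * sn) (Bc * sn + (j:ℝ) * w' * sn + w' * sn)) := by
      rw [hVeq]
      apply ContinuousOn.sub ((continuous_const.mul (hW.cont ω)).continuousOn)
      apply ContinuousOn.mul continuousOn_const
      intro x hx
      have hx0 : x ≠ 0 := (lt_of_lt_of_le haj0 hx.1).ne'
      exact (Real.continuousAt_rpow_const x (1-α) (Or.inl hx0)).continuousWithinAt
    have hVle := le_trans (drawUp_ge (Vfun σ b α (fun u => W u ω)) hcont hax hxy hyb) hj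
    -- drift control
    have hx₀0 : 0 < tgrid j i.castSucc := htg_pos j i.castSucc
    have hdr := drift_bound hα0 hα1 hx₀0 hxy
    have hdiff := htg_diff j i
    have hmono_rpow : (tgrid j i.castSucc) ^ (-α) ≤ (Bc * sn) ^ (-α) :=
      Real.rpow_le_rpow_of_nonpos (mul_pos hBc0 hs0) (hBs_le j i.castSucc)
        (neg_nonpos.2 hα0.le)
    have hBsL : b * (Bc * sn) ^ (-α) * L = (1+2*δ) * T := by
      rw [Real.rpow_neg (by positivity), Real.mul_rpow hBc0.le hs0.le, hsα, hL_def]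
      field_simp
    have e1 : Vfun σ b α (fun u => W u ω) (tgrid j i.succ)
        - Vfun σ b α (fun u => W u ω) (tgrid j i.castSucc)
        = σ * (W (tgrid j i.succ) ω - W (tgrid j i.castSucc) ω)
          - b/(1-α) * ((tgrid j i.succ) ^ (1-α) - (tgrid j i.castSucc) ^ (1-α)) := by
      simp only [Vfun]; ring
    have e2 : b/(1-α) * ((tgrid j i.succ) ^ (1-α) - (tgrid j i.castSucc) ^ (1-α))
        ≤ (1+2*δ) * T := by
      have h3 : b/(1-α) * ((tgrid j i.succ) ^ (1-α) - (tgrid j i.castSucc) ^ (1-α))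
          ≤ b/(1-α) * ((1-α) * (tgrid j i.castSucc) ^ (-α) * L) := by
        apply mul_le_mul_of_nonneg_left _ (div_nonneg hb.le (by linarith only [hα1]))
        rw [← hdiff]
        exact hdr
      have h4 : b/(1-α) * ((1-α) * (tgrid j i.castSucc) ^ (-α) * L)
          = b * (tgrid j i.castSucc) ^ (-α) * L := by
        have h0 : (1:ℝ)-α ≠ 0 := by linarith only [hα1]
        field_simp
      have h5 : b * (tgrid j i.castSucc) ^ (-α) * L ≤ b * (Bc*sn) ^ (-α) * L :=
        mul_le_mul_of_nonneg_right (mul_le_mul_of_nonneg_left hmono_rpow hb.le) hL0.le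
      rw [h4] at h3
      rw [hBsL] at h5
      linarith only [h3, h5]
    rw [e1] at hVle
    have hWd : σ * (W (tgrid j i.succ) ω - W (tgrid j i.castSucc) ω)
        ≤ 2 * ((1+2*δ) * T) := by linarith only [hVle, e2]
    rw [hcth_def, le_div_iff₀ hσ]
    linarith only [hWd]
  -- step 2: probability of each intersection
  have hSS : ∀ j : Fin N, P (⋂ i : Fin k,
      (fun ω => W (tgrid j i.succ) ω - W (tgrid j i.castSucc) ω) ⁻¹' (Set.Iic cth))
      ≤ ENNReal.ofReal ((1-q)^k) := by
    intro j
    have hind := hW.indep_incr k (tgrid j) (htg0 j) (htg_mono j)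
    have hprod := hind.measure_inter_preimage_eq_mul (S := Finset.univ)
      (sets := fun _ => Set.Iic cth) (fun i _ => measurableSet_Iic)
    have heq : (⋂ i : Fin k,
        (fun ω => W (tgrid j i.succ) ω - W (tgrid j i.castSucc) ω) ⁻¹' (Set.Iic cth))
        = ⋂ i ∈ (Finset.univ : Finset (Fin k)),
        (fun ω => W (tgrid j i.succ) ω - W (tgrid j i.castSucc) ω) ⁻¹' (Set.Iic cth) := by
      simp
    rw [heq, hprod]
    have hfac : ∀ i : Fin k,
        P ((fun ω => W (tgrid j i.succ) ω - W (tgrid j i.castSucc) ω) ⁻¹' (Set.Iic cth))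
        ≤ ENNReal.ofReal (1-q) := by
      intro i
      have hmeas : Measurable (fun ω => W (tgrid j i.succ) ω - W (tgrid j i.castSucc) ω) :=
        (hW.measurable _).sub (hW.measurable _)
      rw [← Measure.map_apply hmeas measurableSet_Iic,
        hW.gauss_incr _ _ (htg0 j i.castSucc) (htg_mono j (Fin.castSucc_le_succ i)),
        htg_diff j i]
      have hvne : (Real.toNNReal L) ≠ 0 := (Real.toNNReal_pos.2 hL0).ne'
      have hco : ((Real.toNNReal L : ℝ)) = L := Real.coe_toNNReal _ hL0.le
      have hg := gauss_Iic_le hvne hcth0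
      rw [hco] at hg
      rw [hq_def]
      exact hg
    refine le_trans (Finset.prod_le_prod' fun i _ => hfac i) ?_
    rw [Finset.prod_const, Finset.card_univ, Fintype.card_fin,
      ← ENNReal.ofReal_pow (by linarith)]
  refine le_trans (measure_iUnion_le _) ?_
  rw [tsum_fintype]
  refine le_trans (Finset.sum_le_sum fun j _ => hSS j) ?_
  rw [Finset.sum_const, Finset.card_univ, Fintype.card_fin, nsmul_eq_mul]
  -- step 3: the numeric estimate
  have hsXdec : sn = X ^ γ₁ * X := by
    rw [hsX, show (1:ℝ)/α = γ₁ + 1 by rw [hγ₁_def]; ring, Real.rpow_add hX0, Real.rpow_one]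
  have hR_eq2 : R = (w' * b / ((1+2*δ) * Bc^α)) * (X ^ γ₁ / T) := by
    rw [hR_def, hsXdec, hL_def]
    field_simp
  have hlogX : Real.log X = Real.log Cs - (Real.log n + Real.log lam) + n * lam := by
    rw [hX_def, Real.log_mul (by positivity) hT0.ne',
      Real.log_mul hCs.ne' (by positivity), Real.log_inv,
      Real.log_mul (by positivity) hlam.ne', hlogT]
    ring
  have hXγT : X ^ γ₁ / T = Real.exp (γ₁ * (Real.log Cs - Real.log lam)
      + (γ₁ * lam - lam) * n - γ₁ * Real.log n) := by
    rw [Real.rpow_def_of_pos hX0, hlogX,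
      show T = Real.exp (n*lam) from by rw [← hlogT, Real.exp_log hT0],
      ← Real.exp_sub]
    congr 1
    ring
  have hsqL : Real.sqrt L * Real.sqrt L = L := Real.mul_self_sqrt hL0.le
  have hsqL0 : 0 < Real.sqrt L := Real.sqrt_pos.2 hL0
  have hcc : cth^2 = A₂ * n * (2*L) := by
    have h1 : cth^2/(2*L) = A₂ * n := by
      rw [hcth_def, hL_def, hA₂_def, hX_def, hCs_def]
      field_simp
    rw [div_eq_iff (by positivity : (2*L) ≠ 0)] at h1
    exact h1
  have hcs : cth = D * Real.sqrt n * Real.sqrt L := by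
    have h2 : cth / Real.sqrt L = Real.sqrt (cth^2 / L) := by
      rw [Real.sqrt_div (sq_nonneg cth), Real.sqrt_sq hcth0]
    have h3 : cth^2 / L = (2*A₂) * n := by
      rw [hcc]; field_simp
    have h4 : Real.sqrt ((2*A₂) * (n:ℝ)) = D * Real.sqrt n := by
      rw [Real.sqrt_mul (by positivity), hD_def]
    rw [h3, h4] at h2
    rwa [div_eq_iff hsqL0.ne'] at h2
  have hq_eq : q = (Real.sqrt (2*Real.pi))⁻¹
      * Real.exp (-(A₂*n) - D * Real.sqrt n - 1/2) := by
    rw [hq_def]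
    congr 1
    have e1 : (cth + Real.sqrt L)^2 = (A₂*n + D*Real.sqrt n + 1/2) * (2*L) := by
      linear_combination hcc + (2*Real.sqrt L)*hcs + (2*D*Real.sqrt n + 1)*hsqL
    rw [e1, neg_div, mul_div_cancel_right₀ _ (by positivity : (2*L) ≠ 0)]
    ring
  have hRq : R * q = K * Real.exp (A' * n - D * Real.sqrt n - γ₁ * Real.log n) := by
    rw [hR_eq2, hXγT, hq_eq, hK_def, hA'_def]
    rw [mul_mul_mul_comm, ← Real.exp_add,
      mul_assoc (w' * b / ((1+2*δ) * Bc^α) * (Real.sqrt (2*Real.pi))⁻¹), ← Real.exp_add]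
    congr 1
    ring
  have hkq : Real.log N + Real.log 2 * n ≤ (k:ℝ) * q := by
    have h1 : R - 1 ≤ (k:ℝ) := by
      have := Nat.sub_one_lt_floor R
      rw [hk_def]
      linarith only [this]
    have h2 : Real.log N + 1 + Real.log 2 * n ≤ R * q := by rw [hRq]; exact hEVn
    have h3 : (R-1)*q ≤ (k:ℝ)*q := mul_le_mul_of_nonneg_right h1 hq0.le
    have h4 : (R-1)*q = R*q - q := by ring
    linarith only [h2, h3, h4, hq1]
  have hfinal : (N:ℝ) * (1-q)^k ≤ (1/2)^n := by
    have h1 : (0:ℝ) ≤ 1 - q := by linarith only [hq1]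
    have h2 : (1-q) ≤ Real.exp (-q) := by linarith only [Real.add_one_le_exp (-q)]
    have h3 : (1-q)^k ≤ Real.exp (-q)^k := pow_le_pow_left₀ h1 h2 k
    have h4 : Real.exp (-q)^k = Real.exp (-((k:ℝ)*q)) := by
      rw [← Real.exp_nat_mul]
      congr 1
      ring
    have h5 : Real.exp (-((k:ℝ)*q)) ≤ Real.exp (-(Real.log N + Real.log 2 * n)) :=
      Real.exp_le_exp.2 (by linarith only [hkq])
    have h6 : Real.exp (-(Real.log N + Real.log 2 * n)) = ((N:ℝ))⁻¹ * (1/2)^n := by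
      rw [neg_add, Real.exp_add, Real.exp_neg, Real.exp_log hNpos]
      congr 1
      rw [show -(Real.log 2 * (n:ℝ)) = (n:ℝ) * (-Real.log 2) by ring,
        Real.exp_nat_mul, Real.exp_neg, Real.exp_log two_pos]
      norm_num
    calc (N:ℝ) * (1-q)^k ≤ (N:ℝ) * (((N:ℝ))⁻¹ * (1/2)^n) := by
          apply mul_le_mul_of_nonneg_left _ (Nat.cast_nonneg N)
          calc (1-q)^k ≤ Real.exp (-((k:ℝ)*q)) := h4 ▸ h3
            _ ≤ ((N:ℝ))⁻¹ * (1/2)^n := h6 ▸ h5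
      _ = (1/2)^n := by field_simp
  calc (N:ENNReal) * ENNReal.ofReal ((1-q)^k)
      = ENNReal.ofReal ((N:ℝ) * (1-q)^k) := by
        rw [ENNReal.ofReal_mul (Nat.cast_nonneg N), ENNReal.ofReal_natCast]
    _ ≤ ENNReal.ofReal ((1/2)^n) := ENNReal.ofReal_le_ofReal hfinal
end
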